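/- arXiv:1204.0918 — 4 statements merged into one kernel-verified Lean document; each statement's English description precedes it below -/
import Mathlib

section
/- Let G be a topological abelian group such that every compact subset of G is contained in some reflexive, dually embedded subgroup of G. Then the evaluation map α_G : G → G^∧∧ is surjective. -/
open Pointwise Function

noncomputable section

/-- The canonical evaluation homomorphism of a topological abelian group into its
Pontryagin bidual, `x ↦ (χ ↦ χ x)`. -/
noncomputable def pontryaginEval (G : Type*) [CommGroup G] [TopologicalSpace G]
    [IsTopologicalGroup G] : G →* PontryaginDual (PontryaginDual G) where
  toFun x :=
    { toFun := fun χ => χ x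
      map_one' := rfl
      map_mul' := fun _ _ => rfl
      continuous_toFun :=
        (continuous_eval_const (F := ContinuousMonoidHom G Circle) x :) }
  map_one' := ContinuousMonoidHom.ext fun χ => map_one χ
  map_mul' x y := ContinuousMonoidHom.ext fun χ => map_mul χ x y

/-- A topological group is protodiscrete (linear) if open subgroups form a
neighborhood base at the identity. -/
def Protodiscrete (G : Type*) [Group G] [TopologicalSpace G] : Prop :=
  ∀ U ∈ nhds (1 : G), ∃ V : Subgroup G, IsOpen (V : Set G) ∧ (V : Set G) ⊆ U

/-- A topological group is precompact (totally bounded) if every neighborhood of the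
identity has finitely many translates covering the group. -/
def Precompact (G : Type*) [Group G] [TopologicalSpace G] : Prop :=
  ∀ U ∈ nhds (1 : G), ∃ F : Finset G, ∀ x : G, ∃ f ∈ F, x ∈ f • U

/-- A topological abelian group is (Pontryagin) reflexive if the canonical evaluation
map into its bidual is a topological isomorphism. -/
def PontryaginReflexive (G : Type*) [CommGroup G] [TopologicalSpace G]
    [IsTopologicalGroup G] : Prop :=
  IsHomeomorph (pontryaginEval G)

/-- A subgroup is dually embedded if every continuous character of it extends to a
continuous character of the ambient group. -/
def DuallyEmbedded {G : Type*} [CommGroup G] [TopologicalSpace G] [IsTopologicalGroup G]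
    (L : Subgroup G) : Prop :=
  ∀ χ : PontryaginDual L, ∃ ψ : PontryaginDual G, ∀ x : L, ψ (x : G) = χ x

/-- The annihilator of a subset `K` of `G` in the dual group. -/
def annihilator {G : Type*} [CommGroup G] [TopologicalSpace G] [IsTopologicalGroup G]
    (K : Set G) : Subgroup (PontryaginDual G) where
  carrier := {χ | ∀ x ∈ K, χ x = 1}
  one_mem' := fun x _ => rfl
  mul_mem' := by
    intro a b ha hb x hx
    show a x * b x = 1
    rw [ha x hx, hb x hx, one_mul]
  inv_mem' := by
    intro a ha x hx
    show (a x)⁻¹ = 1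
    rw [ha x hx, inv_one]

/-- A `P`-space: every countable intersection of open sets is open. -/
def IsPSpace (X : Type*) [TopologicalSpace X] : Prop :=
  ∀ s : ℕ → Set X, (∀ n, IsOpen (s n)) → IsOpen (⋂ n, s n)

/-- A set is `Gδ`-dense if it meets every nonempty `Gδ`-set. -/
def GdeltaDense {X : Type*} [TopologicalSpace X] (s : Set X) : Prop :=
  ∀ t : ℕ → Set X, (∀ n, IsOpen (t n)) → (⋂ n, t n).Nonempty → (s ∩ ⋂ n, t n).Nonempty

/-- The graph of a homomorphism, as a subgroup of the product. -/
def graphSubgroup {H₁ H₂ : Type*} [CommGroup H₁] [CommGroup H₂] (φ : H₁ →* H₂) :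
    Subgroup (H₁ × H₂) where
  carrier := {p | p.2 = φ p.1}
  one_mem' := (map_one φ).symm
  mul_mem' := by
    rintro ⟨a, b⟩ ⟨c, d⟩ hb hd
    simp only [Set.mem_setOf_eq] at *
    simp [hb, hd]
  inv_mem' := by
    rintro ⟨a, b⟩ h
    simp only [Set.mem_setOf_eq] at *
    simp [h]

/-- The Σ-product of `D` copies of the circle group inside `𝕋^D`. -/
def sigmaProd (D : Type*) : Subgroup (D → Circle) where
  carrier := {x | {d | x d ≠ 1}.Countable}
  one_mem' := by simp
  mul_mem' := by
    intro a b ha hb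
    refine Set.Countable.mono ?_ (ha.union hb)
    intro d hd
    simp only [Set.mem_union, Set.mem_setOf_eq]
    by_contra h
    push_neg at h
    exact hd (by show a d * b d = 1; rw [h.1, h.2, one_mul])
  inv_mem' := by
    intro a ha
    refine Set.Countable.mono ?_ ha
    intro d hd
    simp only [Set.mem_setOf_eq] at *
    simpa [inv_eq_one] using hd

/-- The group of continuous `Circle`-valued functions on `Y`, as a subgroup of the
product `Y → Circle`; the subspace topology is the topology of pointwise convergence. -/
def Cp (Y : Type*) [TopologicalSpace Y] : Subgroup (Y → Circle) where
  carrier := {f | Continuous f}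
  one_mem' := continuous_const
  mul_mem' := fun hf hg => hf.mul hg
  inv_mem' := fun hf => hf.inv

/-- The one-point Lindelöfication of a discrete set `D`: the point `none` has the
co-countable sets as neighborhoods, all other points are isolated. -/
def Lind (D : Type*) := Option D

instance (D : Type*) : TopologicalSpace (Lind D) where
  IsOpen U := (none : Option D) ∈ U → {d : D | (some d : Option D) ∉ U}.Countable
  isOpen_univ := by intro _; exact Set.countable_empty.mono (fun d hd => hd trivial)
  isOpen_inter := by
    intro U V hU hV h
    refine Set.Countable.mono ?_ ((hU h.1).union (hV h.2))
    intro d hd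
    simp only [Set.mem_union, Set.mem_setOf_eq] at *
    by_contra hc
    push_neg at hc
    exact hd ⟨hc.1, hc.2⟩
  isOpen_sUnion := by
    intro S hS h
    obtain ⟨U, hUS, hU⟩ := h
    refine Set.Countable.mono ?_ (hS U hUS hU)
    intro d hd
    simp only [Set.mem_setOf_eq] at *
    exact fun hdU => hd ⟨U, hUS, hdU⟩

end


section Statement2Aux

open Filter Topology

/-- A circle element all of whose positive powers have nonnegative real part is `1`. -/
private lemma circle_eq_one_of_pow_re_nonneg {z : Circle}
    (h : ∀ n : ℕ, 0 < n → 0 ≤ ((z ^ n : Circle) : ℂ).re) : z = 1 := by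
  set θ := Complex.arg (z : ℂ) with hθdef
  have hre : ∀ n : ℕ, ((z ^ n : Circle) : ℂ).re = Real.cos (n * θ) := by
    intro n
    have h1 : ((z ^ n : Circle) : ℂ) = (z : ℂ) ^ n := by
      exact map_pow Circle.coeHom z n
    have h2 : (z : ℂ) = Complex.exp (θ * Complex.I) := by
      conv_lhs => rw [← Complex.norm_mul_exp_arg_mul_I (z : ℂ)]
      rw [Circle.norm_coe]
      simp [hθdef]
    rw [h1, h2, ← Complex.exp_nat_mul]
    have h3 : (n : ℂ) * (θ * Complex.I) = ((n * θ : ℝ) : ℂ) * Complex.I := by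
      push_cast; ring
    rw [h3, Complex.exp_ofReal_mul_I_re]
  have h1 : 0 ≤ ((z ^ 1 : Circle) : ℂ).re := h 1 one_pos
  rw [pow_one] at h1
  have hθ2 : |θ| ≤ Real.pi / 2 := Complex.abs_arg_le_pi_div_two_iff.mpr h1
  rcases eq_or_lt_of_le (abs_nonneg θ) with h0 | h0
  · have hθ0 : θ = 0 := by rwa [eq_comm, abs_eq_zero] at h0
    have hz1 : (z : ℂ) = 1 := by
      apply Complex.ext_norm_arg
      · rw [Circle.norm_coe, norm_one]
      · rw [← hθdef, hθ0, Complex.arg_one]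
    exact Circle.coe_eq_one.mp hz1
  · exfalso
    set t := |θ| with htdef
    set n : ℕ := ⌊Real.pi / 2 / t⌋₊ + 1 with hndef
    have hπ : (0 : ℝ) < Real.pi := Real.pi_pos
    have hn1 : Real.pi / 2 < n * t := by
      have hfl : Real.pi / 2 / t < (n : ℝ) := by
        have := Nat.lt_floor_add_one (Real.pi / 2 / t)
        rw [hndef]; push_cast; linarith
      calc Real.pi / 2 = Real.pi / 2 / t * t := by field_simp
        _ < n * t := by exact mul_lt_mul_of_pos_right hfl h0
    have hn2 : (n : ℝ) * t ≤ Real.pi / 2 + t := by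
      have hfl : (⌊Real.pi / 2 / t⌋₊ : ℝ) ≤ Real.pi / 2 / t := Nat.floor_le (by positivity)
      have hh : (n : ℝ) ≤ Real.pi / 2 / t + 1 := by rw [hndef]; push_cast; linarith
      calc (n : ℝ) * t ≤ (Real.pi / 2 / t + 1) * t := mul_le_mul_of_nonneg_right hh h0.le
        _ = Real.pi / 2 + t := by field_simp
    have hcos : Real.cos ((n : ℝ) * t) < 0 :=
      Real.cos_neg_of_pi_div_two_lt_of_lt hn1 (by linarith)
    have hnn : 0 ≤ Real.cos ((n : ℝ) * θ) := by
      rw [← hre]; exact h n (Nat.succ_pos _)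
    have heq : Real.cos ((n : ℝ) * θ) = Real.cos ((n : ℝ) * t) := by
      rcases abs_choice θ with hc | hc
      · rw [htdef, hc]
      · rw [htdef, hc, mul_neg, Real.cos_neg]
    rw [heq] at hnn
    linarith

/-- The open right half circle is open and contains `1`. -/
private lemma circle_posRe_isOpen : IsOpen {w : Circle | 0 < (w : ℂ).re} :=
  isOpen_lt continuous_const (Complex.continuous_re.comp continuous_subtype_val)

private lemma circle_one_mem_posRe : (1 : Circle) ∈ {w : Circle | 0 < (w : ℂ).re} := by
  show (0 : ℝ) < ((1 : Circle) : ℂ).re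
  rw [Circle.coe_one, Complex.one_re]
  exact one_pos

/-- Given an open neighbourhood `V` of `1` in the circle, there is `n` such that every `z`
whose first `n` powers have nonnegative real part lies in `V`. -/
private lemma exists_pow_arc_subset {V : Set Circle} (hV : IsOpen V) (h1 : (1 : Circle) ∈ V) :
    ∃ n : ℕ, 0 < n ∧
      {z : Circle | ∀ j : ℕ, 0 < j → j ≤ n → 0 ≤ ((z ^ j : Circle) : ℂ).re} ⊆ V := by
  set C : ℕ → Set Circle :=
    fun n => {z | ∀ j : ℕ, 0 < j → j ≤ n → 0 ≤ ((z ^ j : Circle) : ℂ).re} with hC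
  have hCclosed : ∀ n, IsClosed (C n) := by
    intro n
    have hCn : C n = ⋂ j ∈ {j : ℕ | 0 < j ∧ j ≤ n},
        {z : Circle | 0 ≤ ((z ^ j : Circle) : ℂ).re} := by
      ext z
      simp only [hC, Set.mem_setOf_eq, Set.mem_iInter]
      constructor
      · intro hz j hj; exact hz j hj.1 hj.2
      · intro hz j hj1 hj2; exact hz j ⟨hj1, hj2⟩
    rw [hCn]
    refine isClosed_biInter fun j _ => ?_
    exact isClosed_le continuous_const
      ((Complex.continuous_re.comp continuous_subtype_val).comp (continuous_pow j))
  have hcover : Vᶜ ⊆ ⋃ n : ℕ, (C n)ᶜ := by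
    intro z hz
    have hz1 : z ≠ 1 := fun hzz => hz (hzz ▸ h1)
    by_contra hc
    simp only [Set.mem_iUnion, Set.mem_compl_iff, not_exists, not_not] at hc
    exact hz1 (circle_eq_one_of_pow_re_nonneg fun n hn => hc n n hn le_rfl)
  have hcompact : IsCompact Vᶜ := hV.isClosed_compl.isCompact
  obtain ⟨F, hF⟩ := hcompact.elim_finite_subcover (fun n => (C n)ᶜ)
    (fun n => (hCclosed n).isOpen_compl) hcover
  refine ⟨F.sup id + 1, Nat.succ_pos _, ?_⟩
  intro z hz
  by_contra hzV
  have hzmem := hF hzV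
  simp only [Set.mem_iUnion, Set.mem_compl_iff] at hzmem
  obtain ⟨n, hnF, hn⟩ := hzmem
  refine hn fun j hj hjn => hz j hj ?_
  calc j ≤ n := hjn
    _ ≤ F.sup id := Finset.le_sup (f := id) hnF
    _ ≤ F.sup id + 1 := Nat.le_succ _

/-- A monoid homomorphism into the circle which has nonnegative real part on a
neighbourhood of `1` is continuous. -/
private lemma continuous_of_re_nonneg_nhds {H : Type*} [CommGroup H] [TopologicalSpace H]
    [IsTopologicalGroup H] (f : H →* Circle) {U : Set H} (hU : U ∈ 𝓝 (1 : H))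
    (hf : ∀ h ∈ U, 0 ≤ ((f h : Circle) : ℂ).re) : Continuous f := by
  apply continuous_of_continuousAt_one f
  rw [ContinuousAt, map_one, Filter.tendsto_def]
  intro V hV
  obtain ⟨V', hV'sub, hV'open, hV'mem⟩ := mem_nhds_iff.mp hV
  obtain ⟨n, _, hsub⟩ := exists_pow_arc_subset hV'open hV'mem
  have hW : {h : H | ∀ j : ℕ, 0 < j → j ≤ n → h ^ j ∈ U} ∈ 𝓝 (1 : H) := by
    have hWeq : {h : H | ∀ j : ℕ, 0 < j → j ≤ n → h ^ j ∈ U}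
        = ⋂ j ∈ {j : ℕ | 0 < j ∧ j ≤ n}, (fun h : H => h ^ j) ⁻¹' U := by
      ext x
      simp only [Set.mem_setOf_eq, Set.mem_iInter, Set.mem_preimage]
      constructor
      · intro hx j hj; exact hx j hj.1 hj.2
      · intro hx j hj1 hj2; exact hx j ⟨hj1, hj2⟩
    rw [hWeq]
    refine (Filter.biInter_mem ((Set.finite_Icc 1 n).subset ?_)).mpr fun j _ => ?_
    · intro j hj; exact ⟨hj.1, hj.2⟩
    · refine (continuous_pow j).continuousAt.preimage_mem_nhds ?_
      rwa [one_pow]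
  refine Filter.mem_of_superset hW ?_
  intro x hx
  refine hV'sub (hsub ?_)
  intro j hj hjn
  rw [← map_pow]
  exact hf _ (hx j hj hjn)

private lemma cmh_pow_apply {A : Type*} [CommGroup A] [TopologicalSpace A]
    [IsTopologicalGroup A] (f : ContinuousMonoidHom A Circle) (n : ℕ) (x : A) :
    (f ^ n) x = f x ^ n := by
  induction n with
  | zero => rw [pow_zero, pow_zero]; rfl
  | succ n ih => rw [pow_succ, pow_succ, ← ih]; rfl

/-- Every neighbourhood of `1` in the Pontryagin dual contains the closed polar of some
compact set. -/
private lemma exists_compact_polar_subset {G : Type*} [CommGroup G] [TopologicalSpace G]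
    [IsTopologicalGroup G] {U : Set (PontryaginDual G)} (hU : U ∈ 𝓝 (1 : PontryaginDual G)) :
    ∃ K : Set G, IsCompact K ∧
      {χ : PontryaginDual G | ∀ x ∈ K, 0 ≤ ((χ x : Circle) : ℂ).re} ⊆ U := by
  haveI : Nonempty {K : Set G // IsCompact K} := ⟨⟨∅, isCompact_empty⟩⟩
  set P : {K : Set G // IsCompact K} → Set (PontryaginDual G) :=
    fun K => {χ | ∀ x ∈ K.1, 0 ≤ ((χ x : Circle) : ℂ).re} with hP
  have hdir : Directed (· ≥ ·) fun K => Filter.principal (P K) := by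
    intro K K'
    refine ⟨⟨K.1 ∪ K'.1, K.2.union K'.2⟩, ?_, ?_⟩
    · exact Filter.principal_mono.mpr fun χ hχ x hx => hχ x (Or.inl hx)
    · exact Filter.principal_mono.mpr fun χ hχ x hx => hχ x (Or.inr hx)
  have hle : (⨅ K : {K : Set G // IsCompact K}, Filter.principal (P K))
      ≤ 𝓝 (1 : PontryaginDual G) := by
    rw [show 𝓝 (1 : PontryaginDual G) = Filter.comap ContinuousMonoidHom.toContinuousMap
        (𝓝 (ContinuousMonoidHom.toContinuousMap (1 : PontryaginDual G))) from
        (ContinuousMonoidHom.isInducing_toContinuousMap G Circle).nhds_eq_comap _]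
    refine Filter.map_le_iff_le_comap.mp ?_
    show Filter.Tendsto ContinuousMonoidHom.toContinuousMap
      (⨅ K : {K : Set G // IsCompact K}, Filter.principal (P K))
      (𝓝 (ContinuousMonoidHom.toContinuousMap (1 : PontryaginDual G)))
    rw [ContinuousMap.tendsto_nhds_compactOpen]
    intro K hK V hV hmaps
    rcases K.eq_empty_or_nonempty with rfl | ⟨x₀, hx₀⟩
    · exact Filter.Eventually.of_forall fun χ => Set.mapsTo_empty _ _
    · have h1V : (1 : Circle) ∈ V := by
        have := hmaps hx₀
        exact this
      obtain ⟨n, _, hsub⟩ := exists_pow_arc_subset hV h1V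
      have hK' : IsCompact (⋃ j ∈ Set.Icc 1 n, (fun x : G => x ^ j) '' K) :=
        (Set.finite_Icc 1 n).isCompact_biUnion fun j _ => hK.image (continuous_pow j)
      rw [Filter.eventually_iff]
      refine Filter.mem_iInf_of_mem ⟨_, hK'⟩ (Filter.mem_principal.mpr ?_)
      intro χ hχ x hx
      refine hsub ?_
      intro j hj hjn
      show 0 ≤ ((χ x ^ j : Circle) : ℂ).re
      rw [← map_pow]
      exact hχ (x ^ j) (Set.mem_biUnion ⟨hj, hjn⟩ (Set.mem_image_of_mem _ hx))
  have hmem := hle hU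
  rw [Filter.mem_iInf_of_directed hdir] at hmem
  obtain ⟨K, hK⟩ := hmem
  exact ⟨K.1, K.2, Filter.mem_principal.mp hK⟩

end Statement2Aux

/-- if every compact subset of `G` is contained in a reflexive, dually
embedded subgroup, then the evaluation map `α_G` is surjective. -/
theorem statement2 (G : Type*) [CommGroup G] [TopologicalSpace G] [IsTopologicalGroup G]
    (h : ∀ K : Set G, IsCompact K → ∃ L : Subgroup G, K ⊆ (L : Set G) ∧
      PontryaginReflexive L ∧ DuallyEmbedded L) :
    Function.Surjective (pontryaginEval G) := by
  intro η
  -- Step 1: a compact set whose closed polar is mapped by `η` into the right half circle.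
  have hUnb : ⇑η ⁻¹' {w : Circle | 0 < (w : ℂ).re} ∈ nhds (1 : PontryaginDual G) := by
    have hc : ContinuousAt (⇑η) (1 : PontryaginDual G) := (map_continuous η).continuousAt
    have h1 : η 1 = 1 := map_one η
    refine hc.preimage_mem_nhds ?_
    rw [h1]
    exact circle_posRe_isOpen.mem_nhds circle_one_mem_posRe
  obtain ⟨K, hKc, hKsub⟩ := exists_compact_polar_subset hUnb
  obtain ⟨L, hKL, hLrefl, hLde⟩ := h K hKc
  -- Step 2: `η` annihilates the annihilator of `L`.
  have hannK : ∀ ψ : PontryaginDual G, (∀ x ∈ (L : Set G), ψ x = 1) → η ψ = 1 := by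
    intro ψ hψ
    apply circle_eq_one_of_pow_re_nonneg
    intro n hn
    have hpow : η ψ ^ n = η (ψ ^ n) := (map_pow η ψ n).symm
    rw [hpow]
    have hmem : ψ ^ n ∈ {χ : PontryaginDual G | ∀ x ∈ K, 0 ≤ ((χ x : Circle) : ℂ).re} := by
      intro x hx
      rw [show (ψ ^ n) x = ψ x ^ n from cmh_pow_apply ψ n x, hψ x (hKL hx), one_pow, Circle.coe_one, Complex.one_re]
      exact zero_le_one
    exact (hKsub hmem).le
  -- Step 3: choose extensions of characters of `L`.
  choose ext hextspec using hLde
  -- Step 4: the factored character of the dual of `L`.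
  set ηbar0 : PontryaginDual ↥L →* Circle :=
    { toFun := fun χ => η (ext χ)
      map_one' := hannK (ext 1) fun x hx => by
        have := hextspec 1 ⟨x, hx⟩
        rw [this]; rfl
      map_mul' := fun χ₁ χ₂ => by
        have h0 : η (ext (χ₁ * χ₂) * (ext χ₁ * ext χ₂)⁻¹) = 1 := by
          apply hannK
          intro x hx
          show ext (χ₁ * χ₂) x * ((ext χ₁ * ext χ₂) x)⁻¹ = 1
          rw [show (ext χ₁ * ext χ₂) x = ext χ₁ x * ext χ₂ x from rfl,
            hextspec (χ₁ * χ₂) ⟨x, hx⟩, hextspec χ₁ ⟨x, hx⟩, hextspec χ₂ ⟨x, hx⟩,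
            show (χ₁ * χ₂) ⟨x, hx⟩ = χ₁ ⟨x, hx⟩ * χ₂ ⟨x, hx⟩ from rfl, mul_inv_cancel]
        rw [map_mul, map_inv, map_mul, mul_inv_eq_one] at h0
        exact h0 } with hηbar0
  -- Step 5: `ηbar0` is continuous.
  have hKL' : IsCompact {y : ↥L | (y : G) ∈ K} := by
    rw [Topology.IsEmbedding.subtypeVal.isCompact_iff]
    have himg : Subtype.val '' {y : ↥L | (y : G) ∈ K} = K := by
      ext x
      constructor
      · rintro ⟨y, hy, rfl⟩; exact hy
      · intro hx; exact ⟨⟨x, hKL hx⟩, hx, rfl⟩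
    rw [himg]; exact hKc
  have hULmem : {χ : PontryaginDual ↥L | ∀ y : ↥L, (y : G) ∈ K → 0 ≤ ((χ y : Circle) : ℂ).re}
      ∈ nhds (1 : PontryaginDual ↥L) := by
    have hopen : IsOpen {χ : PontryaginDual ↥L |
        Set.MapsTo (⇑(ContinuousMonoidHom.toContinuousMap χ)) {y : ↥L | (y : G) ∈ K}
          {w : Circle | 0 < (w : ℂ).re}} :=
      (ContinuousMap.isOpen_setOf_mapsTo hKL' circle_posRe_isOpen).preimage
        (ContinuousMonoidHom.isInducing_toContinuousMap ↥L Circle).continuous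
    refine Filter.mem_of_superset (hopen.mem_nhds ?_) ?_
    · intro y _
      exact circle_one_mem_posRe
    · intro χ hχ y hyK
      exact (hχ hyK).le
  have hηcont : Continuous ηbar0 := by
    refine continuous_of_re_nonneg_nhds ηbar0 hULmem ?_
    intro χ hχ
    have hmem : ext χ ∈ {ψ : PontryaginDual G | ∀ x ∈ K, 0 ≤ ((ψ x : Circle) : ℂ).re} := by
      intro x hx
      rw [hextspec χ ⟨x, hKL hx⟩]
      exact hχ ⟨x, hKL hx⟩ hx
    exact (hKsub hmem).le
  set ηbar : PontryaginDual (PontryaginDual ↥L) := { toMonoidHom := ηbar0, continuous_toFun := hηcont }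
    with hηbar
  -- Step 6: use reflexivity of `L`.
  obtain ⟨a, ha⟩ := hLrefl.bijective.surjective ηbar
  refine ⟨(a : G), ?_⟩
  apply ContinuousMonoidHom.ext
  intro ψ
  show ψ (a : G) = η ψ
  set ι : ContinuousMonoidHom ↥L G := ⟨L.subtype, continuous_subtype_val⟩ with hι
  have hres : η (ext (ψ.comp ι) * ψ⁻¹) = 1 := by
    apply hannK
    intro x hx
    show ext (ψ.comp ι) x * (ψ x)⁻¹ = 1
    rw [hextspec (ψ.comp ι) ⟨x, hx⟩]
    show ψ ((⟨x, hx⟩ : ↥L) : G) * (ψ x)⁻¹ = 1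
    exact mul_inv_cancel _
  rw [map_mul, map_inv, mul_inv_eq_one] at hres
  have h3 : η (ext (ψ.comp ι)) = ηbar (ψ.comp ι) := rfl
  have h4 : (pontryaginEval ↥L a) (ψ.comp ι) = ηbar (ψ.comp ι) := by rw [ha]
  have h5 : (pontryaginEval ↥L a) (ψ.comp ι) = ψ (a : G) := rfl
  rw [← hres, h3, ← h4, h5]
end

section
/- Let G be a precompact Hausdorff abelian group whose dual G^∧ (with the compact-open topology) is protodiscrete and has no infinite compact subsets. If G is reflexive, then every compact subset of G is contained in a compact subgroup of G. -/
open Pointwise Function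

section AuxLemmas

/-- No nontrivial element of the circle has all its powers in the right half plane. -/
lemma circle_eq_one_of_pow_re_pos (z : Circle) (h : ∀ n : ℕ, 0 < ((z ^ n : Circle) : ℂ).re) :
    z = 1 := by
  by_contra hz
  set θ : ℝ := Complex.arg (z : ℂ) with hθdef
  have hexp : Circle.exp θ = z := Circle.exp_arg z
  have hpow : ∀ n : ℕ, (z ^ n : Circle) = Circle.exp (n * θ) := by
    intro n
    induction n with
    | zero => simp
    | succ n ih =>
      rw [pow_succ, ih, ← hexp, ← Circle.exp_add]
      congr 1
      push_cast
      ring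
  have hre : ∀ n : ℕ, ((z ^ n : Circle) : ℂ).re = Real.cos (n * θ) := by
    intro n
    rw [hpow n, Circle.coe_exp, Complex.exp_ofReal_mul_I_re]
  have hθ0 : θ ≠ 0 := by
    intro h0
    exact hz (by rw [← hexp, h0, Circle.exp_zero])
  set t : ℝ := |θ| with htdef
  have ht0 : 0 < t := abs_pos.mpr hθ0
  have htπ : t ≤ Real.pi :=
    abs_le.mpr ⟨(Complex.neg_pi_lt_arg _).le, Complex.arg_le_pi _⟩
  set n : ℕ := ⌈(Real.pi / 2) / t⌉₊ with hndef
  have h1 : Real.pi / 2 ≤ n * t := by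
    have := Nat.le_ceil ((Real.pi / 2) / t)
    calc Real.pi / 2 = ((Real.pi / 2) / t) * t := by field_simp
    _ ≤ n * t := by
      apply mul_le_mul_of_nonneg_right _ ht0.le
      exact_mod_cast this
  have h2 : (n : ℝ) * t ≤ Real.pi + Real.pi / 2 := by
    have hc : (n : ℝ) < (Real.pi / 2) / t + 1 := by
      apply Nat.ceil_lt_add_one
      positivity
    have : (n : ℝ) * t ≤ ((Real.pi / 2) / t + 1) * t := by
      apply mul_le_mul_of_nonneg_right hc.le ht0.le
    calc (n : ℝ) * t ≤ ((Real.pi / 2) / t + 1) * t := this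
    _ = Real.pi / 2 + t := by field_simp
    _ ≤ Real.pi + Real.pi / 2 := by linarith
  have hcos : Real.cos (n * t) ≤ 0 := Real.cos_nonpos_of_pi_div_two_le_of_le h1 h2
  have hpos := h n
  rw [hre n] at hpos
  have heq : Real.cos (n * θ) = Real.cos (n * t) := by
    rcases abs_cases θ with ⟨he, _⟩ | ⟨he, _⟩
    · rw [htdef, he]
    · rw [htdef, he, mul_neg, Real.cos_neg]
  rw [heq] at hpos
  linarith

end AuxLemmas

/-- if `G` is precompact Hausdorff, its dual is protodiscrete with no
infinite compact subsets, and `G` is reflexive, then every compact subset of `G` is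
contained in a compact subgroup. -/
theorem statement4 (G : Type*) [CommGroup G] [TopologicalSpace G] [IsTopologicalGroup G]
    [T2Space G] (hpre : Precompact G)
    (hproto : Protodiscrete (PontryaginDual G))
    (hnic : ∀ K : Set (PontryaginDual G), IsCompact K → K.Finite)
    (href : PontryaginReflexive G) :
    ∀ K : Set G, IsCompact K → ∃ C : Subgroup G, IsCompact (C : Set G) ∧ K ⊆ C := by
  intro K hK
  classical
  -- the open right half-plane part of the circle
  set V : Set Circle := {z : Circle | 0 < ((z : Circle) : ℂ).re} with hVdef
  have hVopen : IsOpen V :=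
    isOpen_lt continuous_const (Complex.continuous_re.comp continuous_subtype_val)
  have hV1 : (1 : Circle) ∈ V := by
    simp only [hVdef, Set.mem_setOf_eq, Circle.coe_one, Complex.one_re]
    exact one_pos
  -- the polar-like neighborhood of 1 in the dual
  have hU : {χ : PontryaginDual G | Set.MapsTo (⇑χ) K V} ∈ nhds (1 : PontryaginDual G) := by
    have hopen : IsOpen {f : C(G, Circle) | Set.MapsTo (⇑f) K V} :=
      ContinuousMap.isOpen_setOf_mapsTo hK hVopen
    have hpre : {χ : PontryaginDual G | Set.MapsTo (⇑χ) K V} =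
        (ContinuousMonoidHom.toContinuousMap : PontryaginDual G → C(G, Circle)) ⁻¹'
          {f : C(G, Circle) | Set.MapsTo (⇑f) K V} := rfl
    rw [hpre]
    refine IsOpen.mem_nhds ?_ ?_
    · exact hopen.preimage (ContinuousMonoidHom.isInducing_toContinuousMap G Circle).continuous
    · intro x _
      exact hV1
  obtain ⟨N, hNopen, hNU⟩ := hproto _ hU
  -- N annihilates K
  have hNK : ∀ χ ∈ N, ∀ x ∈ K, χ x = 1 := by
    intro χ hχ x hx
    apply circle_eq_one_of_pow_re_pos
    intro n
    have hmem : χ ^ n ∈ N := pow_mem hχ n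
    have h3 : (χ ^ n) x ∈ V := hNU hmem hx
    have hp : ∀ m : ℕ, (χ ^ m) x = (χ x) ^ m := by
      intro m
      induction m with
      | zero => rfl
      | succ m ih => rw [pow_succ, pow_succ, ← ih]; rfl
    rw [hp n] at h3
    exact h3
  -- the annihilator of N in the bidual is compact
  set S : Set (PontryaginDual (PontryaginDual G)) :=
    (annihilator (N : Set (PontryaginDual G)) : Set (PontryaginDual (PontryaginDual G)))
    with hSdef
  set T : Set (PontryaginDual G → Circle) :=
    {f | (∀ a b : PontryaginDual G, f (a * b) = f a * f b) ∧ ∀ χ ∈ N, f χ = 1} with hTdef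
  have hTclosed : IsClosed T := by
    have hTeq : T = (⋂ (a : PontryaginDual G) (b : PontryaginDual G),
        {f : PontryaginDual G → Circle | f (a * b) = f a * f b}) ∩
        ⋂ (χ : PontryaginDual G) (_ : χ ∈ N), {f : PontryaginDual G → Circle | f χ = 1} := by
      ext f
      simp [hTdef, Set.mem_iInter]
    rw [hTeq]
    refine IsClosed.inter ?_ ?_
    · exact isClosed_iInter fun a => isClosed_iInter fun b =>
        isClosed_eq (continuous_apply _) ((continuous_apply a).mul (continuous_apply b))
    · exact isClosed_iInter fun χ => isClosed_iInter fun _ =>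
        isClosed_eq (continuous_apply χ) continuous_const
  have hTcpt : IsCompact T := hTclosed.isCompact
  -- every element of T is automatically continuous, since it kills the open subgroup N
  have hcontf : ∀ f ∈ T, Continuous f := by
    intro f hf
    rw [continuous_def]
    intro A _
    rw [isOpen_iff_forall_mem_open]
    intro χ hχ
    refine ⟨χ • (N : Set (PontryaginDual G)), ?_, hNopen.smul χ,
      Set.mem_smul_set.mpr ⟨1, N.one_mem, mul_one χ⟩⟩
    intro y hy
    obtain ⟨n, hn, rfl⟩ := Set.mem_smul_set.mp hy
    have : f (χ * n) = f χ * f n := hf.1 χ n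
    show f (χ • n) ∈ A
    rw [smul_eq_mul, this, hf.2 n hn, mul_one]
    exact hχ
  -- the map from T into the bidual
  let Φ : T → PontryaginDual (PontryaginDual G) := fun f =>
    { toFun := f.1
      map_one' := by
        have h11 := f.2.1 1 1
        rw [one_mul] at h11
        exact (left_eq_mul.mp h11)
      map_mul' := f.2.1
      continuous_toFun := hcontf f.1 f.2 }
  have hΦcont : Continuous Φ := by
    refine (ContinuousMonoidHom.isInducing_toContinuousMap (PontryaginDual G)
      Circle).continuous_iff.mpr ?_
    apply ContinuousMap.continuous_of_continuous_uncurry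
    rw [continuous_iff_continuousAt]
    rintro ⟨f₀, χ₀⟩
    have hmem : (Set.univ ×ˢ (χ₀ • (N : Set (PontryaginDual G)))) ∈ nhds (f₀, χ₀) :=
      prod_mem_nhds Filter.univ_mem ((hNopen.smul χ₀).mem_nhds
        (Set.mem_smul_set.mpr ⟨1, N.one_mem, mul_one χ₀⟩))
    have hgc : Continuous fun p : T × PontryaginDual G => p.1.1 χ₀ :=
      (continuous_apply χ₀).comp (continuous_subtype_val.comp continuous_fst)
    refine ContinuousAt.congr hgc.continuousAt (Filter.eventuallyEq_of_mem hmem ?_)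
    rintro ⟨f, χ⟩ ⟨-, hχ⟩
    obtain ⟨n, hn, rfl⟩ := Set.mem_smul_set.mp hχ
    show f.1 χ₀ = f.1 (χ₀ • n)
    rw [smul_eq_mul, f.2.1 χ₀ n, f.2.2 n hn, mul_one]
  have hTspace : CompactSpace T := isCompact_iff_compactSpace.mp hTcpt
  have hScpt : IsCompact S := by
    have hrange : Set.range Φ = S := by
      ext Ψ
      constructor
      · rintro ⟨f, rfl⟩
        intro χ hχ
        exact f.2.2 χ hχ
      · intro hΨ
        refine ⟨⟨⇑Ψ, fun a b => map_mul Ψ a b, fun χ hχ => hΨ χ hχ⟩, ?_⟩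
        exact ContinuousMonoidHom.ext fun χ => rfl
    rw [← hrange]
    exact isCompact_range hΦcont
  -- pull back along the evaluation homeomorphism
  let e := href.homeomorph (pontryaginEval G)
  refine ⟨Subgroup.comap (pontryaginEval G) (annihilator (N : Set (PontryaginDual G))), ?_, ?_⟩
  · have hcoe : (Subgroup.comap (pontryaginEval G)
        (annihilator (N : Set (PontryaginDual G))) : Set G) = ⇑e ⁻¹' S := rfl
    rw [hcoe, e.isCompact_preimage]
    exact hScpt
  · intro x hx
    intro χ hχ
    exact hNK χ hχ x hx
end

section
/- Let G be a Hausdorff abelian topological group and H a closed subgroup. If both H and the quotient G/H are protodiscrete, then G is protodiscrete. -/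
open Pointwise Function

/-- an extension of a protodiscrete abelian group by a protodiscrete group
is protodiscrete. -/
theorem statement8 (G : Type*) [CommGroup G] [TopologicalSpace G] [IsTopologicalGroup G]
    [T2Space G] (H : Subgroup G) (hH : IsClosed (H : Set G))
    (h1 : Protodiscrete H) (h2 : Protodiscrete (G ⧸ H)) :
    Protodiscrete G := by
  intro U hU
  -- Step 1: W₀ open nhds of 1 with W₀ * W₀ ⊆ U
  obtain ⟨W₀, hW₀o, hW₀1, hW₀⟩ := exists_open_nhds_one_split hU
  have hW₀n : W₀ ∈ nhds (1 : G) := hW₀o.mem_nhds hW₀1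
  -- Step 2: open subgroup of H inside W₀
  have hpre : (Subtype.val ⁻¹' W₀ : Set H) ∈ nhds (1 : H) :=
    continuous_subtype_val.continuousAt.preimage_mem_nhds hW₀n
  obtain ⟨VA, hVAo, hVAsub⟩ := h1 _ hpre
  obtain ⟨O, hOo, hOeq⟩ := isOpen_induced_iff.mp hVAo
  set A : Subgroup G := VA.map H.subtype with hAdef
  have hAmem : ∀ g : G, g ∈ A ↔ ∃ h : H, h ∈ VA ∧ (h : G) = g := by
    intro g
    simp [hAdef, Subgroup.mem_map]
  have hAW₀ : (A : Set G) ⊆ W₀ := by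
    rintro g hg
    obtain ⟨h, hh, rfl⟩ := (hAmem g).mp hg
    exact hVAsub hh
  have hAH : ∀ g : G, g ∈ A → g ∈ H := by
    rintro g hg
    obtain ⟨h, _, rfl⟩ := (hAmem g).mp hg
    exact h.2
  have hHOA : ∀ g : G, g ∈ H → g ∈ O → g ∈ A := by
    intro g hgH hgO
    refine (hAmem g).mpr ⟨⟨g, hgH⟩, ?_, rfl⟩
    have : (⟨g, hgH⟩ : H) ∈ Subtype.val ⁻¹' O := hgO
    rw [hOeq] at this
    exact this
  have hO1 : (1 : G) ∈ O := by
    have : (1 : H) ∈ Subtype.val ⁻¹' O := by rw [hOeq]; exact VA.one_mem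
    simpa using this
  -- Step 3: symmetric open W with W*W*W ⊆ O ∩ W₀
  have hO'n : O ∩ W₀ ∈ nhds (1 : G) := (hOo.inter hW₀o).mem_nhds ⟨hO1, hW₀1⟩
  obtain ⟨V₁, hV₁o, hV₁1, hV₁⟩ := exists_open_nhds_one_split hO'n
  obtain ⟨V₂, hV₂o, hV₂1, hV₂⟩ := exists_open_nhds_one_split (hV₁o.mem_nhds hV₁1)
  set W : Set G := (V₁ ∩ V₂) ∩ (V₁ ∩ V₂)⁻¹ with hWdef
  have hWo : IsOpen W := (hV₁o.inter hV₂o).inter (hV₁o.inter hV₂o).inv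
  have hW1 : (1 : G) ∈ W := ⟨⟨hV₁1, hV₂1⟩, by simp [hV₁1, hV₂1]⟩
  have hWsymm : ∀ w ∈ W, w⁻¹ ∈ W := by
    rintro w ⟨hw1, hw2⟩
    exact ⟨hw2, by simpa using hw1⟩
  have hW3 : ∀ a ∈ W, ∀ b ∈ W, ∀ c ∈ W, a * b * c ∈ O ∩ W₀ := by
    rintro a ⟨⟨_, ha2⟩, _⟩ b ⟨⟨_, hb2⟩, _⟩ c ⟨⟨hc1, _⟩, _⟩
    exact hV₁ _ (hV₂ a ha2 b hb2) c hc1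
  have hWO' : W ⊆ O ∩ W₀ := by
    intro w hw
    have := hW3 w hw 1 hW1 1 hW1
    simpa using this
  -- Step 4: open subgroup C of G/H inside the image of W
  have hmkc : Continuous ((↑) : G → G ⧸ H) := QuotientGroup.continuous_mk
  have himg : (((↑) : G → G ⧸ H) '' W) ∈ nhds (1 : G ⧸ H) :=
    (QuotientGroup.isOpenMap_coe W hWo).mem_nhds ⟨1, hW1, rfl⟩
  obtain ⟨C, hCo, hCsub⟩ := h2 _ himg
  -- Step 5: the open subgroup of G
  set S : Set G := W ∩ ((↑) : G → G ⧸ H) ⁻¹' (C : Set (G ⧸ H)) with hSdef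
  have hSo : IsOpen S := hWo.inter (hCo.preimage hmkc)
  have hS1 : (1 : G) ∈ S := ⟨hW1, by
    show ((1 : G) : G ⧸ H) ∈ C
    simpa using C.one_mem⟩
  refine ⟨Subgroup.closure (S ∪ (A : Set G)), ?_, ?_⟩
  · refine Subgroup.isOpen_of_mem_nhds _ (Filter.mem_of_superset (hSo.mem_nhds hS1) ?_)
    exact fun x hx => Subgroup.subset_closure (Set.mem_union_left _ hx)
  · -- every element of the closure is in W * A and its class is in C
    have key : ∀ g ∈ Subgroup.closure (S ∪ (A : Set G)),
        (∃ w ∈ W, ∃ a ∈ A, g = w * a) ∧ ((g : G ⧸ H) ∈ C) := by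
      intro g hg
      induction hg using Subgroup.closure_induction with
      | mem x hx =>
        rcases hx with hx | hx
        · exact ⟨⟨x, hx.1, 1, A.one_mem, (mul_one x).symm⟩, hx.2⟩
        · refine ⟨⟨1, hW1, x, hx, (one_mul x).symm⟩, ?_⟩
          have : ((x : G) : G ⧸ H) = 1 := (QuotientGroup.eq_one_iff x).mpr (hAH x hx)
          rw [this]; exact C.one_mem
      | one => exact ⟨⟨1, hW1, 1, A.one_mem, (mul_one 1).symm⟩, by simpa using C.one_mem⟩
      | mul x y hx hy ihx ihy =>
        obtain ⟨⟨w, hw, a, ha, rfl⟩, hCx⟩ := ihx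
        obtain ⟨⟨w', hw', a', ha', rfl⟩, hCy⟩ := ihy
        have hamk : ∀ b : G, b ∈ A → ((b : G ⧸ H) : G ⧸ H) = 1 := fun b hb =>
          (QuotientGroup.eq_one_iff b).mpr (hAH b hb)
        have hwC : ((w : G ⧸ H)) ∈ C := by
          have : ((w * a : G) : G ⧸ H) = (w : G ⧸ H) := by
            rw [QuotientGroup.mk_mul, hamk a ha, mul_one]
          rwa [this] at hCx
        have hw'C : ((w' : G ⧸ H)) ∈ C := by
          have : ((w' * a' : G) : G ⧸ H) = (w' : G ⧸ H) := by
            rw [QuotientGroup.mk_mul, hamk a' ha', mul_one]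
          rwa [this] at hCy
        have hwwC : (((w * w' : G) : G ⧸ H)) ∈ C := by
          rw [QuotientGroup.mk_mul]; exact C.mul_mem hwC hw'C
        obtain ⟨w'', hw'', heq⟩ := hCsub hwwC
        have hhH : w''⁻¹ * (w * w') ∈ H := QuotientGroup.eq.mp heq
        have hhO : w''⁻¹ * (w * w') ∈ O ∩ W₀ := by
          have := hW3 w''⁻¹ (hWsymm w'' hw'') w hw w' hw'
          rwa [mul_assoc] at this
        have hhA : w''⁻¹ * (w * w') ∈ A := hHOA _ hhH hhO.1
        refine ⟨⟨w'', hw'', (w''⁻¹ * (w * w')) * (a * a'),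
          A.mul_mem hhA (A.mul_mem ha ha'), by rw [mul_mul_mul_comm]; group⟩, ?_⟩
        rw [QuotientGroup.mk_mul]; exact C.mul_mem hCx hCy
      | inv x hx ihx =>
        obtain ⟨⟨w, hw, a, ha, rfl⟩, hCx⟩ := ihx
        refine ⟨⟨w⁻¹, hWsymm w hw, a⁻¹, A.inv_mem ha, by rw [mul_inv]⟩, ?_⟩
        rw [QuotientGroup.mk_inv]; exact C.inv_mem hCx
    intro g hg
    obtain ⟨⟨w, hw, a, ha, rfl⟩, -⟩ := key g hg
    exact hW₀ w ((hWO' hw).2) a (hAW₀ ha)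
end

section
/- Let Y be the one-point Lindelöfication of an uncountable discrete set D. Then the topological group C_p(Y, 𝕋) is not reflexive: its Pontryagin dual is discrete, its bidual is the compact group 𝕋 × 𝕋^D, but C_p(Y, 𝕋) itself is a proper dense non-compact subgroup of 𝕋^Y. -/
open Pointwise Function

open Complex Real Function

lemma exp_nat_mul' (ψ : ℝ → Circle) (hadd : ∀ s t, ψ (s + t) = ψ s * ψ t)
    (h0 : ψ 0 = 1) (k : ℕ) (x : ℝ) : ψ (k * x) = ψ x ^ k := by
  induction k with
  | zero => simpa using h0
  | succ n ih =>
    have : ((n : ℝ) + 1) * x = n * x + x := by ring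
    rw [Nat.cast_succ, this, hadd, ih, pow_succ]

lemma Circle.exp_nat_mul (k : ℕ) (x : ℝ) : Circle.exp (k * x) = Circle.exp x ^ k :=
  exp_nat_mul' _ Circle.exp_add Circle.exp_zero k x

lemma Circle.exp_int_mul (m : ℤ) (x : ℝ) : Circle.exp (m * x) = Circle.exp x ^ m := by
  have h := map_zsmul Circle.expHom m x
  have : Circle.exp (m • x) = (Circle.exp x) ^ m := by
    simpa using congrArg Additive.toMul h
  simpa [zsmul_eq_mul] using this

lemma exp_cancel {a b : ℝ} (h : Circle.exp a = Circle.exp b) (hb : |a - b| < 2 * π) :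
    a = b := by
  obtain ⟨m, hm⟩ := Circle.exp_eq_exp.mp h
  have h2 : |(m : ℝ)| * (2 * π) < 2 * π := by
    calc |(m : ℝ)| * (2 * π) = |(m : ℝ) * (2 * π)| := by
          rw [abs_mul, abs_of_pos Real.two_pi_pos]
      _ = |a - b| := by rw [hm]; ring_nf
      _ < 2 * π := hb
  have hm0 : m = 0 := by
    by_contra hm0
    have : (1 : ℝ) ≤ |(m : ℝ)| := by
      exact_mod_cast Int.one_le_abs (by exact_mod_cast hm0 : m ≠ 0)
    nlinarith [Real.two_pi_pos]
  rw [hm0] at hm; simpa using hm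

theorem real_char (ψ : ℝ → Circle) (hc : Continuous ψ)
    (hadd : ∀ s t, ψ (s + t) = ψ s * ψ t) : ∃ c : ℝ, ∀ t, ψ t = Circle.exp (c * t) := by
  have h0 : ψ 0 = 1 := by
    have h := hadd 0 0
    rw [add_zero] at h
    exact (left_eq_mul.mp h)
  -- find ε
  obtain ⟨ε, hε, hsmall⟩ : ∃ ε > 0, ∀ t : ℝ, |t| < ε → dist (ψ t) 1 < 1/2 := by
    have := Metric.continuousAt_iff.mp (hc.continuousAt (x := 0))
    obtain ⟨δ, hδ, h⟩ := this (1/2) (by norm_num)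
    exact ⟨δ, hδ, fun t ht => by simpa [h0] using h (by simpa using ht)⟩
  set f : ℝ → ℝ := fun t => Complex.arg (ψ t) with hf
  have hexp : ∀ t, Circle.exp (f t) = ψ t := fun t => Circle.exp_arg _
  have hb : ∀ t, |t| < ε → |f t| < π / 2 := by
    intro t ht
    rw [Complex.abs_arg_lt_pi_div_two_iff]
    left
    have hd : dist ((ψ t : ℂ)) 1 < 1/2 := by
      have := hsmall t ht
      exact this
    have : (1 - (ψ t : ℂ)).re ≤ ‖1 - (ψ t : ℂ)‖ := Complex.re_le_norm _
    rw [Complex.dist_eq] at hd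
    have habs : ‖1 - (ψ t : ℂ)‖ = ‖(ψ t : ℂ) - 1‖ := by
      exact norm_sub_rev 1 _
    simp only [Complex.sub_re, Complex.one_re] at this
    nlinarith [hd, habs ▸ this]
  have hple : ∀ t, |f t| ≤ π := fun t =>
    abs_le.mpr ⟨(Complex.neg_pi_lt_arg _).le, Complex.arg_le_pi _⟩
  -- local additivity
  have step5 : ∀ s t, |s| < ε/2 → |t| < ε/2 → f (s + t) = f s + f t := by
    intro s t hs ht
    have hst : |s + t| < ε := by
      calc |s + t| ≤ |s| + |t| := abs_add_le _ _
        _ < ε/2 + ε/2 := by gcongr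
        _ = ε := by ring
    have he : Circle.exp (f (s + t)) = Circle.exp (f s + f t) := by
      rw [Circle.exp_add, hexp, hexp, hexp, hadd]
    refine exp_cancel he ?_
    have h1 := hb (s+t) hst
    have h2 := hb s (hs.trans (by linarith))
    have h3 := hb t (ht.trans (by linarith))
    have := Real.pi_pos
    calc |f (s + t) - (f s + f t)| ≤ |f (s+t)| + (|f s| + |f t|) := by
          exact (abs_sub _ _).trans (by gcongr; exact abs_add_le _ _)
      _ < π/2 + (π/2 + π/2) := by gcongr
      _ < 2 * π := by linarith
  have halve : ∀ t, |t| < ε → f t = 2 * f (t / 2) := by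
    intro t ht
    have h2 : |t/2| < ε/2 := by rw [abs_div]; simp; linarith [abs_nonneg t, ht]
    have := step5 (t/2) (t/2) h2 h2
    rw [show t/2 + t/2 = t by ring] at this
    rw [this]; ring
  have consist : ∀ n : ℕ, ∀ t, |t| < ε → f t = 2^n * f (t / 2^n) := by
    intro n
    induction n with
    | zero => intro t _; simp
    | succ n ih =>
      intro t ht
      have h1 := halve t ht
      have h2 : |t/2| < ε := by
        rw [abs_div]; simp
        nlinarith [abs_nonneg t, ht, hε]
      rw [h1, ih (t/2) h2, show t/2/2^n = t/2^(n+1) by rw [div_div, pow_succ]; ring_nf]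
      ring
  -- choose exponents
  have hN : ∀ t : ℝ, ∃ n : ℕ, |t| / 2^n < ε := by
    intro t
    obtain ⟨n, hn⟩ := pow_unbounded_of_one_lt (|t| / ε) (one_lt_two (α := ℝ))
    exact ⟨n, by rw [div_lt_iff₀ (by positivity)] at hn ⊢; nlinarith [abs_nonneg t]⟩
  have habsdiv : ∀ (t : ℝ) (n : ℕ), |t / 2^n| = |t| / 2^n := by
    intro t n; rw [abs_div, abs_of_pos (by positivity : (0:ℝ) < 2^n)]
  have consist2 : ∀ (t : ℝ) (m n : ℕ), |t| / 2^m < ε → |t| / 2^n < ε →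
      2^m * f (t / 2^m) = 2^n * f (t / 2^n) := by
    have key : ∀ (m n : ℕ), m ≤ n → ∀ t : ℝ, |t| / 2^m < ε →
        2^m * f (t / 2^m) = 2^n * f (t / 2^n) := by
      intro m n hmn t hm
      have h1 : f (t / 2^m) = 2^(n - m) * f ((t / 2^m) / 2^(n-m)) :=
        consist (n - m) (t / 2^m) (by rw [habsdiv]; exact hm)
      have h2 : (t / 2^m) / 2^(n-m) = t / 2^n := by
        rw [div_div, ← pow_add, Nat.add_sub_cancel' hmn]
      rw [h1, h2, ← mul_assoc, ← pow_add, Nat.add_sub_cancel' hmn]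
    intro t m n hm hn
    rcases le_total m n with h | h
    · exact key m n h t hm
    · exact (key n m h t hn).symm
  set F : ℝ → ℝ := fun t => 2 ^ (hN t).choose * f (t / 2 ^ (hN t).choose) with hF
  have Fspec : ∀ (t : ℝ) (n : ℕ), |t| / 2^n < ε → F t = 2^n * f (t / 2^n) := by
    intro t n hn
    exact consist2 t (hN t).choose n (hN t).choose_spec hn
  have Fsmall : ∀ t, |t| < ε → F t = f t := by
    intro t ht
    have := Fspec t 0 (by simpa using ht)
    simpa using this
  have hmono : ∀ (t : ℝ) (m n : ℕ), m ≤ n → |t| / 2^n ≤ |t| / 2^m := by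
    intro t m n h
    exact div_le_div_of_nonneg_left (abs_nonneg t) (by positivity)
      (pow_le_pow_right₀ one_le_two h)
  have Fadd : ∀ s t, F (s + t) = F s + F t := by
    intro s t
    obtain ⟨n₁, h₁⟩ := hN (2 * s)
    obtain ⟨n₂, h₂⟩ := hN (2 * t)
    set n := max n₁ n₂ with hn
    have hs2 : |s| / 2^n < ε / 2 := by
      have := (hmono (2*s) n₁ n (le_max_left _ _)).trans_lt h₁
      rw [abs_mul, _root_.abs_two, mul_div_assoc] at this
      linarith [this]
    have ht2 : |t| / 2^n < ε / 2 := by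
      have := (hmono (2*t) n₂ n (le_max_right _ _)).trans_lt h₂
      rw [abs_mul, _root_.abs_two, mul_div_assoc] at this
      linarith [this]
    have hst : |s + t| / 2^n < ε := by
      have : |s + t| / 2^n ≤ |s| / 2^n + |t| / 2^n := by
        rw [← add_div]; gcongr; exact abs_add_le _ _
      linarith
    rw [Fspec (s+t) n hst, Fspec s n (by linarith [hs2, hε]), Fspec t n (by linarith [ht2, hε])]
    have hsplit : (s + t) / 2^n = s / 2^n + t / 2^n := by ring
    rw [hsplit, step5 (s / 2^n) (t / 2^n) (by rw [habsdiv]; exact hs2)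
      (by rw [habsdiv]; exact ht2)]
    ring
  -- continuity of F at 0
  have hf0 : f 0 = 0 := by simp [hf, h0]
  have fcont0 : ContinuousAt f 0 := by
    have h1 : ContinuousAt (fun z : ℂ => Complex.arg z) ((ψ 0 : ℂ)) := by
      rw [h0]
      exact Complex.continuousAt_arg (by simp [Complex.mem_slitPlane_iff])
    exact ContinuousAt.comp (x := (0:ℝ)) (g := Complex.arg)
      (f := fun t => ((ψ t : ℂ))) h1 ((continuous_subtype_val.comp hc).continuousAt)
  have Fcont0 : ContinuousAt F 0 := by
    refine fcont0.congr ?_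
    have : ∀ᶠ t in nhds (0:ℝ), |t| < ε := by
      filter_upwards [Metric.ball_mem_nhds (0:ℝ) hε] with t ht
      simpa [Real.dist_eq] using ht
    exact this.mono fun t ht => (Fsmall t ht).symm
  set Fhom : ℝ →+ ℝ := AddMonoidHom.mk' F Fadd with hFhom
  have Fcont : Continuous F := by
    have : ContinuousAt Fhom 0 := Fcont0
    exact continuous_of_continuousAt_zero Fhom this
  have Flin : ∀ t : ℝ, F t = F 1 * t := by
    intro t
    have := map_real_smul Fhom Fcont t 1
    simpa [smul_eq_mul, mul_comm, hFhom] using this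
  refine ⟨F 1, fun t => ?_⟩
  obtain ⟨n, hn⟩ := hN t
  have hsm : |t / 2^n| < ε := by rw [habsdiv]; exact hn
  have h1 : ψ t = ψ (t / 2^n) ^ (2^n : ℕ) := by
    have := exp_nat_mul' ψ hadd h0 (2^n) (t / 2^n)
    rw [show ((2^n : ℕ) : ℝ) * (t / 2^n) = t by push_cast; field_simp] at this
    exact this
  have h2 : ψ (t / 2^n) = Circle.exp (F 1 * (t / 2^n)) := by
    rw [← hexp (t / 2^n), ← Fsmall _ hsm, Flin (t / 2^n)]
  rw [h1, h2, ← Circle.exp_nat_mul]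
  congr 1
  push_cast
  field_simp

theorem circle_char (φ : Circle →* Circle) (hφ : Continuous φ) :
    ∃ n : ℤ, ∀ z, φ z = z ^ n := by
  obtain ⟨c, hc⟩ := real_char (fun t => φ (Circle.exp t))
    (hφ.comp Circle.exp.continuous)
    (fun s t => by simp only [Circle.exp_add, map_mul])
  have h1 : Circle.exp (c * (2 * π)) = 1 := by
    rw [← hc (2 * π), Circle.exp_two_pi, map_one]
  obtain ⟨m, hm⟩ := Circle.exp_eq_one.mp h1
  have hcm : c = m := by
    field_simp at hm
    exact hm
  refine ⟨m, fun z => ?_⟩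
  have := hc (Complex.arg z)
  rw [Circle.exp_arg] at this
  rw [this, hcm, Circle.exp_int_mul, Circle.exp_arg]
section Stage2
variable {D : Type*}

lemma continuous_lind_of (f : Lind D → Circle) (h : {d | f (some d) ≠ f none}.Countable) :
    Continuous f := by
  rw [continuous_def]
  intro U hU
  show (none : Option D) ∈ f ⁻¹' U → {d : D | (some d : Option D) ∉ f ⁻¹' U}.Countable
  intro hnone
  refine h.mono fun d hd => ?_
  simp only [Set.mem_setOf_eq, Set.mem_preimage] at hd ⊢
  intro heq
  exact hd (show f (some d) ∈ U by rw [heq]; exact hnone)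

lemma countable_of_continuous_lind (f : Lind D → Circle) (hf : Continuous f) :
    {d | f (some d) ≠ f none}.Countable := by
  have key : ∀ n : ℕ, {d : D | (some d : Option D) ∉ f ⁻¹' Metric.ball (f none) (1/(n+1))}.Countable := by
    intro n
    have hU : IsOpen (f ⁻¹' Metric.ball (f none) (1/(n+1))) :=
      hf.isOpen_preimage _ Metric.isOpen_ball
    exact hU (show f none ∈ Metric.ball (f none) (1/((n:ℝ)+1)) from Metric.mem_ball_self (by positivity))
  refine (Set.countable_iUnion key).mono fun d hd => ?_
  simp only [Set.mem_setOf_eq] at hd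
  have hpos : 0 < dist (f (some d)) (f none) := dist_pos.mpr hd
  obtain ⟨n, hn⟩ := exists_nat_one_div_lt hpos
  refine Set.mem_iUnion.mpr ⟨n, ?_⟩
  simp only [Set.mem_setOf_eq, Set.mem_preimage, Metric.mem_ball, not_lt]
  intro h'
  have h'' : dist (f (some d)) (f none) < 1/((n:ℝ)+1) := h'
  have hn' : 1/((n:ℝ)+1) < dist (f (some d)) (f none) := by exact_mod_cast hn
  linarith

lemma dense_Cp : Dense ((Cp (Lind D) : Subgroup (Lind D → Circle)) : Set (Lind D → Circle)) := by
  classical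
  rw [dense_iff_inter_open]
  intro U hU ⟨g, hg⟩
  obtain ⟨I, u, hu, hsub⟩ := isOpen_pi_iff.mp hU g hg
  set c₀ : Circle := if (none : Lind D) ∈ I then g none else 1 with hc₀
  set h : Lind D → Circle := fun y => if y ∈ I then g y else c₀ with hh
  have hmem : h ∈ U := by
    apply hsub
    intro y hy
    simp only [hh, if_pos (by exact_mod_cast hy)]
    exact (hu y (by exact_mod_cast hy)).2
  have hcont : Continuous h := by
    apply continuous_lind_of
    have hnone : h none = c₀ := by
      by_cases hn : (none : Lind D) ∈ I
      · simp [hh, hn, hc₀]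
      · simp [hh, hn]; exact fun h' => absurd h' hn
    refine Set.Countable.mono ?_
      ((Set.Finite.preimage (Option.some_injective D).injOn I.finite_toSet).countable)
    intro d hd
    simp only [Set.mem_setOf_eq, hnone] at hd
    show (some d : Lind D) ∈ I
    by_contra hdI
    exact hd (by simp [hh, hdI]; exact fun h' => absurd h' hdI)
  exact ⟨h, hmem, hcont⟩

lemma circle_exp_pi_ne_one : Circle.exp Real.pi ≠ 1 := by
  intro h
  have h2 : (Circle.exp Real.pi : ℂ) = 1 := by rw [h]; simp
  rw [Circle.coe_exp, Complex.exp_pi_mul_I] at h2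
  norm_num at h2

lemma Cp_ne_top [Uncountable D] : (Cp (Lind D) : Subgroup (Lind D → Circle)) ≠ ⊤ := by
  intro htop
  set f : Lind D → Circle := fun y => y.elim 1 (fun _ => Circle.exp Real.pi) with hf
  have hmem : f ∈ Cp (Lind D) := htop ▸ Subgroup.mem_top f
  have hcont : Continuous f := hmem
  have hcnt := countable_of_continuous_lind f hcont
  have huniv : {d : D | f (some d) ≠ f none} = Set.univ := by
    ext d; simp [hf, circle_exp_pi_ne_one]
  rw [huniv, Set.countable_univ_iff] at hcnt
  exact not_countable hcnt

lemma Cp_not_compact [Uncountable D] :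
    ¬ IsCompact ((Cp (Lind D) : Subgroup (Lind D → Circle)) : Set (Lind D → Circle)) := by
  intro hcomp
  have hclosed : IsClosed ((Cp (Lind D) : Subgroup (Lind D → Circle)) : Set (Lind D → Circle)) :=
    hcomp.isClosed
  have : ((Cp (Lind D) : Subgroup (Lind D → Circle)) : Set (Lind D → Circle)) = Set.univ := by
    rw [← hclosed.closure_eq]
    exact dense_Cp.closure_eq
  exact Cp_ne_top (SetLike.coe_injective (by rw [this]; simp))

end Stage2
section Stage3

open Complex Real
open scoped Classical

noncomputable section

variable {D : Type*}

/-- The constant-functions embedding `Circle →* Cp(Lind D)`. -/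
def constHom : Circle →* ↥(Cp (Lind D)) where
  toFun c := ⟨fun _ => c, continuous_const⟩
  map_one' := rfl
  map_mul' _ _ := rfl

lemma constHom_continuous : Continuous (constHom (D := D)) := by
  apply Continuous.subtype_mk
  exact continuous_pi fun _ => continuous_id

lemma deltaF_mem (d : D) (z : Circle) :
    (fun y : Lind D => if y = some d then z else 1) ∈ Cp (Lind D) := by
  apply continuous_lind_of
  refine Set.Countable.mono ?_ (Set.countable_singleton d)
  intro d' hd'
  simp only [Set.mem_setOf_eq] at hd'
  by_contra h
  apply hd'
  have hne : d' ≠ d := by simpa using h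
  erw [if_neg (show ¬ ((some d' : Lind D) = some d) from fun hc => hne (Option.some_injective D hc)),
    if_neg (show ¬ ((none : Lind D) = some d) from fun hc => (Option.some_ne_none _).symm hc)]

/-- The "delta at `some d`" embedding `Circle →* Cp(Lind D)`. -/
def deltaHom (d : D) : Circle →* ↥(Cp (Lind D)) where
  toFun z := ⟨fun y => if y = some d then z else 1, deltaF_mem d z⟩
  map_one' := by
    apply Subtype.ext; funext y
    show (if y = (some d : Lind D) then (1 : Circle) else 1) = 1
    split <;> rfl
  map_mul' z w := by
    apply Subtype.ext; funext y
    show (if y = (some d : Lind D) then z * w else 1)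
      = (if y = (some d : Lind D) then z else 1) * (if y = (some d : Lind D) then w else 1)
    split <;> simp

lemma deltaHom_continuous (d : D) : Continuous (deltaHom (D := D) d) := by
  apply Continuous.subtype_mk
  refine continuous_pi fun y => ?_
  show Continuous fun z : Circle => if y = (some d : Lind D) then z else 1
  by_cases h : y = (some d : Lind D)
  · simp only [if_pos h]; exact continuous_id
  · simp only [if_neg h]; exact continuous_const

/-- Evaluation at a point, as an element of the Pontryagin dual. -/
def evalChar (y : Lind D) : PontryaginDual ↥(Cp (Lind D)) where
  toFun f := (f : Lind D → Circle) y
  map_one' := rfl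
  map_mul' _ _ := rfl
  continuous_toFun := (continuous_apply y).comp continuous_subtype_val

/-- `f ↦ f (some d) / f none`, as an element of the Pontryagin dual. -/
def quez (d : D) : PontryaginDual ↥(Cp (Lind D)) where
  toFun f := (f : Lind D → Circle) (some d) / (f : Lind D → Circle) none
  map_one' := by show (1 : Circle) / 1 = 1; simp
  map_mul' f g := by
    show (↑f * ↑g : Lind D → Circle) (some d) / (↑f * ↑g : Lind D → Circle) none = _
    show ((f : Lind D → Circle) (some d) * (g : Lind D → Circle) (some d)) / ((f : Lind D → Circle) none * (g : Lind D → Circle) none) = _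
    exact mul_div_mul_comm _ _ _ _
  continuous_toFun :=
    (evalChar (D := D) (some d)).continuous.div' (evalChar (D := D) none).continuous

@[simp] lemma evalChar_apply (y : Lind D) (f : ↥(Cp (Lind D))) :
    evalChar y f = (f : Lind D → Circle) y := by rfl

@[simp] lemma quez_apply (d : D) (f : ↥(Cp (Lind D))) :
    quez d f = (f : Lind D → Circle) (some d) / (f : Lind D → Circle) none := by rfl

@[simp] lemma constHom_coe (c : Circle) (y : Lind D) :
    ((constHom c : ↥(Cp (Lind D))) : Lind D → Circle) y = c := rfl

@[simp] lemma deltaHom_coe (d : D) (z : Circle) (y : Lind D) :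
    ((deltaHom d z : ↥(Cp (Lind D))) : Lind D → Circle) y = if y = some d then z else 1 := by rfl

/-- Key fact: a subgroup of the circle contained in the open right half plane is trivial. -/
lemma halfplane_key : ∀ b : ℝ, 0 < b → b < π / 2 →
    ¬ (∀ n : ℕ, 0 < ((Circle.exp b ^ n : Circle) : ℂ).re) := by
  intro b hb hb2 hall
  set n₀ := Nat.ceil (π / 2 / b) with hn₀
  have hge : π / 2 ≤ n₀ * b := by
    have := Nat.le_ceil (π / 2 / b)
    rw [div_le_iff₀ hb] at this
    exact this
  have hlt : (n₀ : ℝ) * b ≤ π := by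
    have h1 : (n₀ : ℝ) < π / 2 / b + 1 := Nat.ceil_lt_add_one (by positivity)
    have h2 : (n₀ : ℝ) * b < (π / 2 / b + 1) * b := by nlinarith
    rw [add_mul, div_mul_cancel₀ _ hb.ne'] at h2
    nlinarith [Real.pi_pos]
  have hre := hall n₀
  rw [← Circle.exp_nat_mul] at hre
  rw [Circle.coe_exp] at hre
  have : (Complex.exp ((n₀ * b : ℝ) * Complex.I)).re = Real.cos (n₀ * b) :=
    Complex.exp_ofReal_mul_I_re _
  rw [this] at hre
  have : Real.cos (n₀ * b) ≤ 0 :=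
    Real.cos_nonpos_of_pi_div_two_le_of_le hge (by nlinarith [Real.pi_pos])
  linarith

lemma eq_one_of_subgroup_halfplane (S : Subgroup Circle)
    (hS : ∀ w ∈ S, 0 < ((w : Circle) : ℂ).re) {z : Circle} (hz : z ∈ S) : z = 1 := by
  set a := Complex.arg z with ha
  have hza : Circle.exp a = z := Circle.exp_arg z
  have habs : |a| < π / 2 := by
    rw [Complex.abs_arg_lt_pi_div_two_iff]
    exact Or.inl (hS z hz)
  rcases lt_trichotomy a 0 with h | h | h
  · exfalso
    refine halfplane_key (-a) (by linarith) (by rw [abs_lt] at habs; linarith) fun n => ?_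
    have : Circle.exp (-a) = z⁻¹ := by rw [Circle.exp_neg, hza]
    rw [this]
    exact hS _ (S.pow_mem (S.inv_mem hz) n)
  · rw [← hza, h, Circle.exp_zero]
  · exfalso
    refine halfplane_key a h (by rw [abs_lt] at habs; linarith) fun n => ?_
    rw [hza]
    exact hS _ (S.pow_mem hz n)

/-- Every integer power identity forced on all of `Circle` gives exponent zero. -/
lemma zpow_eq_one_forall {m : ℤ} (h : ∀ z : Circle, z ^ m = 1) : m = 0 := by
  by_contra hm
  have hm' : ((m : ℝ)) ≠ 0 := by exact_mod_cast hm
  have := h (Circle.exp (π / m))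
  rw [← Circle.exp_int_mul] at this
  rw [show (m : ℝ) * (π / m) = π by field_simp] at this
  exact circle_exp_pi_ne_one this

/-- Neighborhood extraction: every continuous character of `Cp (Lind D)` kills the subgroup
of functions vanishing on some finite set. -/
lemma exists_finset_killing (χ : PontryaginDual ↥(Cp (Lind D))) :
    ∃ I : Finset (Lind D), ∀ f : ↥(Cp (Lind D)),
      (∀ y ∈ I, (f : Lind D → Circle) y = 1) → χ f = 1 := by
  classical
  set V : Set Circle := {w | 0 < ((w : Circle) : ℂ).re} with hV
  have hVopen : IsOpen V := by
    have : Continuous fun w : Circle => ((w : Circle) : ℂ).re :=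
      Complex.continuous_re.comp continuous_subtype_val
    exact isOpen_lt continuous_const this
  have h1V : (1 : Circle) ∈ V := by simp [hV]
  have hmem : χ ⁻¹' V ∈ nhds (1 : ↥(Cp (Lind D))) := by
    have hcont : Continuous χ := χ.continuous
    have : χ 1 ∈ V := by rw [map_one]; exact h1V
    exact hcont.continuousAt.preimage_mem_nhds (hVopen.mem_nhds this)
  rw [nhds_subtype_eq_comap, Filter.mem_comap] at hmem
  obtain ⟨W, hW, hWsub⟩ := hmem
  obtain ⟨O, hOW, hOopen, hO1⟩ := mem_nhds_iff.mp hW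
  obtain ⟨I, u, hu, hpi⟩ := isOpen_pi_iff.mp hOopen _ hO1
  refine ⟨I, fun f hf => ?_⟩
  -- the subgroup of functions vanishing on I
  set HI : Subgroup ↥(Cp (Lind D)) :=
    { carrier := {g | ∀ y ∈ I, (g : Lind D → Circle) y = 1}
      one_mem' := fun y _ => rfl
      mul_mem' := by
        intro a b ha hb y hy
        show (↑a * ↑b : Lind D → Circle) y = 1
        rw [Pi.mul_apply, ha y hy, hb y hy, one_mul]
      inv_mem' := by
        intro a ha y hy
        show (↑a : Lind D → Circle)⁻¹ y = 1
        rw [Pi.inv_apply, ha y hy, inv_one] } with hHI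
  have hHIV : ∀ g ∈ HI, χ g ∈ V := by
    intro g hg
    apply hWsub
    apply hOW
    apply hpi
    intro y hy
    have := hg y (by exact_mod_cast hy)
    show (g : Lind D → Circle) y ∈ u y
    rw [this]
    exact (hu y (by exact_mod_cast hy)).2
  have hf' : f ∈ HI := hf
  refine eq_one_of_subgroup_halfplane (Subgroup.map χ.toMonoidHom HI) ?_
    ⟨f, hf', rfl⟩
  rintro w ⟨g, hg, rfl⟩
  exact hHIV g hg

end
end Stage3
section Stage4
open Complex Real
open scoped Classical
noncomputable section
variable {D : Type*}

lemma dual_one_apply (f : ↥(Cp (Lind D))) :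
    (1 : PontryaginDual ↥(Cp (Lind D))) f = 1 := rfl

lemma prod_delta_coe (s : Finset D) (w : D → Circle) (y : Lind D) :
    ((∏ d ∈ s, deltaHom d (w d) : ↥(Cp (Lind D))) : Lind D → Circle) y
      = ∏ d ∈ s, (if y = (some d : Lind D) then w d else 1) := by
  have h := map_prod (evalChar (D := D) y).toMonoidHom (fun d => deltaHom d (w d)) s
  exact h

lemma prod_delta_none (s : Finset D) (w : D → Circle) :
    ((∏ d ∈ s, deltaHom d (w d) : ↥(Cp (Lind D))) : Lind D → Circle) none = 1 := by
  erw [prod_delta_coe]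
  exact Finset.prod_eq_one fun d _ => if_neg (fun hc => (Option.some_ne_none _).symm hc)

lemma prod_delta_some_mem (s : Finset D) (w : D → Circle) {d₀ : D} (h : d₀ ∈ s) :
    ((∏ d ∈ s, deltaHom d (w d) : ↥(Cp (Lind D))) : Lind D → Circle) (some d₀) = w d₀ := by
  erw [prod_delta_coe]
  refine Finset.prod_eq_single_of_mem d₀ h (fun d _ hd => if_neg ?_) |>.trans (if_pos rfl)
  exact fun hc => hd (Option.some_injective D hc).symm

lemma prod_delta_some_not_mem (s : Finset D) (w : D → Circle) {d₀ : D} (h : d₀ ∉ s) :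
    ((∏ d ∈ s, deltaHom d (w d) : ↥(Cp (Lind D))) : Lind D → Circle) (some d₀) = 1 := by
  erw [prod_delta_coe]
  refine Finset.prod_eq_one fun d hd => if_neg fun hc => ?_
  exact h ((Option.some_injective D hc) ▸ hd)

/-- Every continuous character of `Cp (Lind D)` is a finite product of coordinate
characters. -/
theorem char_formula (χ : PontryaginDual ↥(Cp (Lind D))) :
    ∃ (a : ℤ) (s : Finset D) (b : D → ℤ), ∀ f : ↥(Cp (Lind D)),
      χ f = ((f : Lind D → Circle) none) ^ a *
        ∏ d ∈ s, (((f : Lind D → Circle) (some d)) / ((f : Lind D → Circle) none)) ^ (b d) := by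
  obtain ⟨I, hI⟩ := exists_finset_killing χ
  set s : Finset D := I.preimage some (Option.some_injective D).injOn with hs
  obtain ⟨a, ha⟩ := circle_char (χ.toMonoidHom.comp constHom)
    (χ.continuous.comp constHom_continuous)
  obtain ⟨b, hb⟩ : ∃ b : D → ℤ, ∀ d z, χ (deltaHom d z) = z ^ (b d) := by
    choose b hb using fun d : D => circle_char (χ.toMonoidHom.comp (deltaHom d))
      (χ.continuous.comp (deltaHom_continuous d))
    exact ⟨b, fun d z => hb d z⟩
  refine ⟨a, s, b, fun f => ?_⟩
  set c : Circle := (f : Lind D → Circle) none with hc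
  set g : ↥(Cp (Lind D)) :=
    constHom c * ∏ d ∈ s, deltaHom d ((f : Lind D → Circle) (some d) / c) with hg
  have hgnone : (g : Lind D → Circle) none = c := by
    show ((constHom c : ↥(Cp (Lind D))) : Lind D → Circle) none *
      ((∏ d ∈ s, deltaHom d ((f : Lind D → Circle) (some d) / c) : ↥(Cp (Lind D)))
        : Lind D → Circle) none = c
    erw [constHom_coe, prod_delta_none, mul_one]
  have hgsome : ∀ d ∈ s, (g : Lind D → Circle) (some d) = (f : Lind D → Circle) (some d) := by
    intro d hd
    show ((constHom c : ↥(Cp (Lind D))) : Lind D → Circle) (some d) *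
      ((∏ d' ∈ s, deltaHom d' ((f : Lind D → Circle) (some d') / c) : ↥(Cp (Lind D)))
        : Lind D → Circle) (some d) = _
    erw [constHom_coe, prod_delta_some_mem _ _ hd, ← mul_div_assoc, mul_comm,
      mul_div_assoc, div_self', mul_one]
  have hker : χ (g⁻¹ * f) = 1 := by
    refine hI _ fun y hy => ?_
    show ((g : Lind D → Circle)⁻¹ * (f : Lind D → Circle)) y = 1
    rw [Pi.mul_apply, Pi.inv_apply]
    match y with
    | none => rw [hgnone, hc, inv_mul_cancel]
    | some d =>
      have hd : d ∈ s := by rw [hs]; exact Finset.mem_preimage.mpr hy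
      rw [hgsome d hd, inv_mul_cancel]
  have hfg : χ f = χ g := by
    have : f = g * (g⁻¹ * f) := by group
    rw [this, map_mul, hker, mul_one]
  rw [hfg, hg, map_mul, map_prod]
  rw [show χ (constHom c) = c ^ a from ha c]
  congr 1
  exact Finset.prod_congr rfl fun d _ => hb d _

theorem dualCp_discrete : DiscreteTopology (PontryaginDual ↥(Cp (Lind D))) := by
  rw [discreteTopology_iff_isOpen_singleton_one]
  set V : Set Circle := {w | 0 < ((w : Circle) : ℂ).re} with hV
  have hVopen : IsOpen V :=
    isOpen_lt continuous_const (Complex.continuous_re.comp continuous_subtype_val)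
  set K₁ : Set ↥(Cp (Lind D)) := Set.range (constHom : Circle →* _) with hK₁def
  set K₂ : Set ↥(Cp (Lind D)) := {f | (f : Lind D → Circle) none = 1 ∧
    ∀ d₁ d₂ : D, d₁ ≠ d₂ →
      (f : Lind D → Circle) (some d₁) = 1 ∨ (f : Lind D → Circle) (some d₂) = 1} with hK₂def
  have hK₁ : IsCompact K₁ := isCompact_range constHom_continuous
  have hK₂ : IsCompact K₂ := by
    rw [Subtype.isCompact_iff]
    set K₂' : Set (Lind D → Circle) := {g | g none = 1 ∧ ∀ d₁ d₂ : D, d₁ ≠ d₂ →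
      g (some d₁) = 1 ∨ g (some d₂) = 1} with hK₂'
    have himg : Subtype.val '' K₂ = K₂' := by
      apply Set.Subset.antisymm
      · rintro _ ⟨f, hf, rfl⟩; exact hf
      · rintro g ⟨hg1, hg2⟩
        have hcont : Continuous g := by
          apply continuous_lind_of
          refine Set.Subsingleton.countable ?_
          intro d₁ h₁ d₂ h₂
          by_contra hne
          simp only [Set.mem_setOf_eq, hg1] at h₁ h₂
          rcases hg2 d₁ d₂ hne with h | h
          · exact h₁ h
          · exact h₂ h
        exact ⟨⟨g, hcont⟩, ⟨hg1, hg2⟩, rfl⟩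
      
    rw [himg]
    have hev : ∀ y : Lind D, Continuous fun g : Lind D → Circle => g y :=
      fun y => continuous_apply y
    have hclosed : IsClosed K₂' := by
      rw [hK₂', Set.setOf_and]
      apply IsClosed.inter
      · exact isClosed_eq (hev none) continuous_const
      · have : {g : Lind D → Circle | ∀ d₁ d₂ : D, d₁ ≠ d₂ →
            g (some d₁) = 1 ∨ g (some d₂) = 1}
            = ⋂ (d₁ : D), ⋂ (d₂ : D), {g | d₁ ≠ d₂ → g (some d₁) = 1 ∨ g (some d₂) = 1} := by
          ext g; simp
        rw [this]
        refine isClosed_iInter fun d₁ => isClosed_iInter fun d₂ => ?_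
        by_cases h : d₁ = d₂
        · have : {g : Lind D → Circle | d₁ ≠ d₂ → g (some d₁) = 1 ∨ g (some d₂) = 1}
              = Set.univ := by
            ext g; simp [h]
          rw [this]; exact isClosed_univ
        · have : {g : Lind D → Circle | d₁ ≠ d₂ → g (some d₁) = 1 ∨ g (some d₂) = 1}
              = {g | g (some d₁) = 1} ∪ {g | g (some d₂) = 1} := by
            ext g; simp [h]
          rw [this]
          exact ((isClosed_eq (hev _) continuous_const).union
            (isClosed_eq (hev _) continuous_const))
    exact hclosed.isCompact
  have hK : IsCompact (K₁ ∪ K₂) := hK₁.union hK₂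
  have hΩopen : IsOpen {χ : PontryaginDual ↥(Cp (Lind D)) |
      Set.MapsTo (ContinuousMonoidHom.toContinuousMap χ) (K₁ ∪ K₂) V} := by
    have := (ContinuousMonoidHom.isInducing_toContinuousMap
      (↥(Cp (Lind D))) Circle).continuous.isOpen_preimage _
      (ContinuousMap.isOpen_setOf_mapsTo hK hVopen)
    exact this
  have heq : ({1} : Set (PontryaginDual ↥(Cp (Lind D)))) =
      {χ | Set.MapsTo (ContinuousMonoidHom.toContinuousMap χ) (K₁ ∪ K₂) V} := by
    apply Set.Subset.antisymm
    · rintro χ rfl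
      intro f _
      show (0 : ℝ) < (((1 : PontryaginDual ↥(Cp (Lind D))) f : Circle) : ℂ).re
      rw [dual_one_apply]
      norm_num
    · intro χ hχ
      have hconst : ∀ c : Circle, χ (constHom c) = 1 := by
        intro c
        refine eq_one_of_subgroup_halfplane
          (Subgroup.map χ.toMonoidHom (MonoidHom.range (constHom (D := D)))) ?_
          ⟨constHom c, ⟨c, rfl⟩, rfl⟩
        rintro w ⟨g, ⟨c', rfl⟩, rfl⟩
        exact hχ (Or.inl ⟨c', rfl⟩)
      have hdelta : ∀ (d : D) (z : Circle), χ (deltaHom d z) = 1 := by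
        intro d z
        refine eq_one_of_subgroup_halfplane
          (Subgroup.map χ.toMonoidHom (MonoidHom.range (deltaHom (D := D) d))) ?_
          ⟨deltaHom d z, ⟨z, rfl⟩, rfl⟩
        rintro w ⟨g, ⟨z', rfl⟩, rfl⟩
        refine hχ (Or.inr ⟨?_, ?_⟩)
        · exact if_neg (fun hc => (Option.some_ne_none _).symm hc)
        · intro d₁ d₂ hne
          by_cases h1 : d₁ = d
          · right
            refine if_neg fun hc => ?_
            exact hne (h1.trans (Option.some_injective D hc).symm)
          · left
            exact if_neg fun hc => h1 (Option.some_injective D hc)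
      obtain ⟨a, s, b, hab⟩ := char_formula χ
      have ha : a = 0 := by
        refine zpow_eq_one_forall fun c => ?_
        have := hab (constHom c)
        rw [hconst c] at this
        have h2 : ∀ d ∈ s, (((constHom (D := D) c : ↥(Cp (Lind D))) : Lind D → Circle) (some d)
            / ((constHom (D := D) c : ↥(Cp (Lind D))) : Lind D → Circle) none) ^ (b d) = 1 := by
          intro d _
          erw [constHom_coe, div_self', one_zpow]
        erw [Finset.prod_congr rfl h2, Finset.prod_const_one, mul_one, constHom_coe] at this
        exact this.symm
      have hbz : ∀ d ∈ s, b d = 0 := by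
        intro d hd
        refine zpow_eq_one_forall fun z => ?_
        have := hab (deltaHom d z)
        rw [hdelta d z] at this
        have hnone : ((deltaHom d z : ↥(Cp (Lind D))) : Lind D → Circle) none = 1 :=
          if_neg (fun hc => (Option.some_ne_none _).symm hc)
        rw [hnone, one_zpow, one_mul] at this
        have hprod : ∀ d' ∈ s, d' ≠ d →
            (((deltaHom d z : ↥(Cp (Lind D))) : Lind D → Circle) (some d') / 1) ^ (b d') = 1 := by
          intro d' _ hne
          erw [deltaHom_coe, if_neg (fun hc => hne (Option.some_injective D hc)),
            div_one, one_zpow]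
        rw [Finset.prod_eq_single_of_mem d hd (fun d' h' hne => hprod d' h' hne)] at this
        erw [deltaHom_coe, if_pos rfl, div_one] at this
        exact this.symm
      have : ∀ f, χ f = 1 := by
        intro f
        rw [hab f, ha, zpow_zero, one_mul]
        refine Finset.prod_eq_one fun d hd => ?_
        rw [hbz d hd, zpow_zero]
      exact ContinuousMonoidHom.ext this
  rw [heq]
  exact hΩopen

end
end Stage4
section Stage5
open Complex Real
open scoped Classical
noncomputable section
variable {D : Type*}

lemma continuous_uncurry_discrete {A B C : Type*} [TopologicalSpace A] [TopologicalSpace B]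
    [DiscreteTopology B] [TopologicalSpace C] (f : A → B → C)
    (h : ∀ b, Continuous fun a => f a b) : Continuous (Function.uncurry f) := by
  rw [continuous_iff_continuousAt]
  rintro ⟨a, b⟩
  unfold ContinuousAt
  rw [nhds_prod_eq, nhds_discrete B, Filter.prod_pure, Filter.tendsto_map'_iff]
  exact (h b).continuousAt

/-- The free-abelian parametrization of the dual of `Cp (Lind D)`. -/
def thetaFun (m : ℤ × (D →₀ ℤ)) : PontryaginDual ↥(Cp (Lind D)) :=
  evalChar none ^ m.1 * m.2.prod fun d k => quez d ^ k

lemma dual_mul_apply (χ ψ : PontryaginDual ↥(Cp (Lind D))) (f : ↥(Cp (Lind D))) :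
    (χ * ψ) f = χ f * ψ f := rfl

lemma thetaFun_apply (m : ℤ × (D →₀ ℤ)) (f : ↥(Cp (Lind D))) :
    thetaFun m f = ((f : Lind D → Circle) none) ^ m.1 *
      ∏ d ∈ m.2.support,
        (((f : Lind D → Circle) (some d)) / ((f : Lind D → Circle) none)) ^ (m.2 d) := by
  have h : thetaFun m f = (pontryaginEval ↥(Cp (Lind D)) f) (thetaFun (D := D) m) := rfl
  rw [h, thetaFun]
  show (pontryaginEval ↥(Cp (Lind D)) f)
    (evalChar none ^ m.1 * ∏ d ∈ m.2.support, quez d ^ m.2 d) = _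
  rw [map_mul, map_zpow, map_prod]
  congr 1
  refine Finset.prod_congr rfl fun d _ => ?_
  rw [map_zpow]
  rfl

lemma thetaFun_add (m m' : ℤ × (D →₀ ℤ)) :
    thetaFun (m + m') = thetaFun (D := D) m * thetaFun m' := by
  unfold thetaFun
  rw [Prod.fst_add, Prod.snd_add, zpow_add,
    Finsupp.prod_add_index' (fun d => zpow_zero _) (fun d k l => zpow_add _ k l)]
  exact mul_mul_mul_comm _ _ _ _

lemma thetaFun_zero : thetaFun (0 : ℤ × (D →₀ ℤ)) = 1 := by
  unfold thetaFun
  rw [Prod.fst_zero, Prod.snd_zero, zpow_zero, Finsupp.prod_zero_index, one_mul]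

lemma thetaFun_surjective : Function.Surjective (thetaFun (D := D)) := by
  intro χ
  obtain ⟨a, s, b, hab⟩ := char_formula χ
  set b' : D →₀ ℤ := Finsupp.onFinset s (fun d => if d ∈ s then b d else 0)
    (fun d hd => by by_contra h; exact hd (if_neg h)) with hb'
  refine ⟨(a, b'), ?_⟩
  apply ContinuousMonoidHom.ext
  intro f
  erw [thetaFun_apply, hab f]
  congr 1
  have happ : ∀ d, b' d = if d ∈ s then b d else 0 := fun d => rfl
  have hsub : b'.support ⊆ s := by
    intro d hd
    rw [Finsupp.mem_support_iff] at hd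
    by_contra h
    exact hd (by rw [happ, if_neg h])
  refine (Finset.prod_subset hsub fun d hd hnd => ?_).trans
    (Finset.prod_congr rfl fun d hd => ?_)
  · rw [Finsupp.notMem_support_iff.mp hnd, zpow_zero]
  · rw [happ d, if_pos hd]

lemma thetaFun_injective : Function.Injective (thetaFun (D := D)) := by
  have key : ∀ m : ℤ × (D →₀ ℤ), thetaFun m = 1 → m = 0 := by
    intro ⟨a, b⟩ h1
    have ha : a = 0 := by
      refine zpow_eq_one_forall fun c => ?_
      have := congrFun (congrArg DFunLike.coe h1) (constHom c)
      rw [thetaFun_apply, dual_one_apply] at this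
      simp only [constHom_coe] at this
      rw [Finset.prod_congr rfl (fun d _ => by erw [constHom_coe, div_self', one_zpow]),
        Finset.prod_const_one, mul_one] at this
      exact this
    have hb : b = 0 := by
      ext d₀
      by_cases hd₀ : d₀ ∈ b.support
      · refine zpow_eq_one_forall fun z => ?_
        have := congrFun (congrArg DFunLike.coe h1) (deltaHom d₀ z)
        rw [thetaFun_apply, dual_one_apply] at this
        have hnone : ((deltaHom d₀ z : ↥(Cp (Lind D))) : Lind D → Circle) none = 1 :=
          if_neg (fun hc => (Option.some_ne_none _).symm hc)
        rw [hnone, one_zpow, one_mul] at this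
        rw [Finset.prod_eq_single_of_mem d₀ hd₀ (fun d' _ hne => by
          erw [deltaHom_coe, if_neg (fun hc => hne (Option.some_injective D hc)), div_one,
            one_zpow])] at this
        erw [deltaHom_coe, if_pos rfl, div_one] at this
        exact this
      · exact Finsupp.notMem_support_iff.mp hd₀
    rw [Prod.ext_iff]
    exact ⟨ha, by simpa using hb⟩
  have hneg : ∀ m : ℤ × (D →₀ ℤ), thetaFun (D := D) (-m) = (thetaFun m)⁻¹ := by
    intro m
    have h1 : thetaFun (D := D) (m + (-m)) = 1 := by rw [add_neg_cancel, thetaFun_zero]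
    rw [thetaFun_add] at h1
    exact (inv_eq_of_mul_eq_one_right h1).symm
  intro m m' h
  have h1 : thetaFun (D := D) (m + (-m')) = 1 := by
    rw [thetaFun_add, hneg, h, mul_inv_cancel]
  have hz := key _ h1
  exact sub_eq_zero.mp (by rwa [sub_eq_add_neg])

/-- The parametrization as an `Equiv`. -/
def thetaEquiv : (ℤ × (D →₀ ℤ)) ≃ PontryaginDual ↥(Cp (Lind D)) :=
  Equiv.ofBijective thetaFun ⟨thetaFun_injective, thetaFun_surjective⟩

lemma thetaEquiv_symm_mul (χ ψ : PontryaginDual ↥(Cp (Lind D))) :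
    (thetaEquiv (D := D)).symm (χ * ψ) = thetaEquiv.symm χ + thetaEquiv.symm ψ := by
  apply thetaFun_injective
  show thetaEquiv (thetaEquiv.symm (χ * ψ)) = thetaFun _
  rw [Equiv.apply_symm_apply]
  rw [show thetaFun ((thetaEquiv (D := D)).symm χ + thetaEquiv.symm ψ)
    = thetaFun (thetaEquiv.symm χ) * thetaFun (thetaEquiv.symm ψ) from thetaFun_add _ _]
  show χ * ψ = thetaEquiv (thetaEquiv.symm χ) * thetaEquiv (thetaEquiv.symm ψ)
  rw [Equiv.apply_symm_apply, Equiv.apply_symm_apply]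

lemma thetaEquiv_symm_one : (thetaEquiv (D := D)).symm 1 = 0 := by
  apply thetaFun_injective
  show thetaEquiv (thetaEquiv.symm 1) = thetaFun 0
  rw [Equiv.apply_symm_apply, thetaFun_zero]

/-- The underlying function of the inverse map of the bidual isomorphism. -/
def einvAux (p : Circle × (D → Circle)) (χ : PontryaginDual ↥(Cp (Lind D))) : Circle :=
  p.1 ^ (thetaEquiv.symm χ).1 *
    ∏ d ∈ (thetaEquiv.symm χ).2.support, (p.2 d) ^ ((thetaEquiv.symm χ).2 d)

lemma einvAux_one (p : Circle × (D → Circle)) : einvAux (D := D) p 1 = 1 := by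
  unfold einvAux
  rw [thetaEquiv_symm_one]
  simp

lemma einvAux_mul (p : Circle × (D → Circle)) (χ ψ : PontryaginDual ↥(Cp (Lind D))) :
    einvAux p (χ * ψ) = einvAux p χ * einvAux p ψ := by
  unfold einvAux
  rw [thetaEquiv_symm_mul]
  set m := (thetaEquiv (D := D)).symm χ
  set m' := (thetaEquiv (D := D)).symm ψ
  rw [Prod.fst_add, Prod.snd_add, zpow_add]
  rw [show (∏ d ∈ (m.2 + m'.2).support, (p.2 d) ^ ((m.2 + m'.2) d))
      = (m.2 + m'.2).prod (fun d k => (p.2 d) ^ k) from rfl]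
  rw [Finsupp.prod_add_index' (fun d => zpow_zero _) (fun d k l => zpow_add _ k l)]
  rw [show (m.2.prod fun d k => (p.2 d) ^ k) = ∏ d ∈ m.2.support, (p.2 d) ^ (m.2 d) from rfl,
    show (m'.2.prod fun d k => (p.2 d) ^ k) = ∏ d ∈ m'.2.support, (p.2 d) ^ (m'.2 d) from rfl]
  exact mul_mul_mul_comm _ _ _ _

/-- The inverse map of the bidual isomorphism. -/
def EinvFun (p : Circle × (D → Circle)) :
    PontryaginDual (PontryaginDual ↥(Cp (Lind D))) :=
  haveI : DiscreteTopology (PontryaginDual ↥(Cp (Lind D))) := dualCp_discrete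
  { toFun := einvAux p
    map_one' := einvAux_one p
    map_mul' := einvAux_mul p
    continuous_toFun := continuous_of_discreteTopology }

lemma theta_one_zero : thetaFun (D := D) (1, 0) = evalChar none := by
  show evalChar none ^ (1 : ℤ) * (0 : D →₀ ℤ).prod (fun d k => quez d ^ k) = evalChar none
  rw [Finsupp.prod_zero_index, mul_one, zpow_one]

lemma theta_single (d : D) : thetaFun (D := D) (0, Finsupp.single d 1) = quez d := by
  show evalChar none ^ (0 : ℤ) * (Finsupp.single d 1).prod (fun d k => quez d ^ k) = quez d
  rw [zpow_zero, one_mul, Finsupp.prod_single_index (h := fun d k => quez (D := D) d ^ k) (zpow_zero _), zpow_one]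

lemma EinvFun_evalChar (p : Circle × (D → Circle)) :
    EinvFun (D := D) p (evalChar none) = p.1 := by
  have h : (thetaEquiv (D := D)).symm (evalChar none) = (1, 0) := by
    apply thetaFun_injective
    show thetaEquiv (thetaEquiv.symm (evalChar none)) = thetaFun (1, 0)
    rw [Equiv.apply_symm_apply, theta_one_zero]
  show p.1 ^ ((thetaEquiv (D := D)).symm (evalChar (D := D) none)).1 *
      ∏ d ∈ ((thetaEquiv (D := D)).symm (evalChar (D := D) none)).2.support,
        (p.2 d) ^ (((thetaEquiv (D := D)).symm (evalChar (D := D) none)).2 d) = p.1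
  rw [h]
  simp

lemma EinvFun_quez (p : Circle × (D → Circle)) (d : D) :
    EinvFun (D := D) p (quez d) = p.2 d := by
  have h : (thetaEquiv (D := D)).symm (quez d) = (0, Finsupp.single d 1) := by
    apply thetaFun_injective
    show thetaEquiv (thetaEquiv.symm (quez d)) = thetaFun (0, Finsupp.single d 1)
    rw [Equiv.apply_symm_apply, theta_single]
  show p.1 ^ ((thetaEquiv (D := D)).symm (quez d)).1 *
      ∏ d' ∈ ((thetaEquiv (D := D)).symm (quez d)).2.support,
        (p.2 d') ^ (((thetaEquiv (D := D)).symm (quez d)).2 d') = p.2 d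
  rw [h]
  simp [Finsupp.support_single_ne_zero]

end
end Stage5
section Stage6
open Complex Real
noncomputable section
variable {D : Type*}

/-- The forward map of the bidual isomorphism. -/
def EFun (Φ : PontryaginDual (PontryaginDual ↥(Cp (Lind D)))) : Circle × (D → Circle) :=
  (Φ (evalChar none), fun d => Φ (quez d))

lemma Einv_E (Φ : PontryaginDual (PontryaginDual ↥(Cp (Lind D)))) :
    EinvFun (EFun Φ) = Φ := by
  apply ContinuousMonoidHom.ext
  intro χ
  show einvAux (EFun Φ) χ = Φ χ
  set m := (thetaEquiv (D := D)).symm χ with hm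
  have hχ : thetaFun m = χ := thetaEquiv.apply_symm_apply χ
  conv_rhs => rw [← hχ]
  have hθ : thetaFun (D := D) m = evalChar none ^ m.1 * ∏ d ∈ m.2.support, quez d ^ m.2 d := rfl
  rw [hθ, map_mul, map_zpow, map_prod]
  show (Φ (evalChar none)) ^ m.1 *
      ∏ d ∈ m.2.support, ((fun d => Φ (quez d)) d) ^ (m.2 d) = _
  congr 1
  exact Finset.prod_congr rfl fun d _ => (map_zpow Φ _ _).symm

lemma E_Einv (p : Circle × (D → Circle)) : EFun (EinvFun (D := D) p) = p := by
  refine Prod.ext ?_ ?_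
  · exact EinvFun_evalChar p
  · exact funext fun d => EinvFun_quez p d

/-- The bidual of `Cp (Lind D)` is isomorphic to `Circle × Circle^D`. -/
def bidualMulEquiv :
    PontryaginDual (PontryaginDual ↥(Cp (Lind D))) ≃* (Circle × (D → Circle)) where
  toFun := EFun
  invFun := EinvFun
  left_inv := Einv_E
  right_inv := E_Einv
  map_mul' Φ Ψ := rfl

lemma EFun_continuous : Continuous (EFun (D := D)) := by
  refine Continuous.prodMk ?_ (continuous_pi fun d => ?_)
  · exact (continuous_eval_const (F := ContinuousMonoidHom (PontryaginDual ↥(Cp (Lind D))) Circle) (evalChar none) :)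
  · exact (continuous_eval_const (F := ContinuousMonoidHom (PontryaginDual ↥(Cp (Lind D))) Circle) (quez d) :)

lemma EinvFun_continuous : Continuous (EinvFun (D := D)) := by
  haveI : DiscreteTopology (PontryaginDual ↥(Cp (Lind D))) := dualCp_discrete
  erw [(ContinuousMonoidHom.isInducing_toContinuousMap _ _).continuous_iff]
  apply ContinuousMap.continuous_of_continuous_uncurry
  apply continuous_uncurry_discrete
  intro χ
  show Continuous fun p : Circle × (D → Circle) => einvAux p χ
  unfold einvAux
  exact (continuous_fst.zpow _).mul
    (continuous_finset_prod _ fun d _ => ((continuous_apply d).comp continuous_snd).zpow _)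

theorem Cp_not_reflexive [Uncountable D] : ¬ PontryaginReflexive (Cp (Lind D)) := by
  intro h
  obtain ⟨ho, hho⟩ := isHomeomorph_iff_exists_homeomorph.mp h
  have h1 : IsCompact (Set.univ : Set (PontryaginDual (PontryaginDual ↥(Cp (Lind D))))) := by
    have := (isCompact_univ (X := Circle × (D → Circle))).image
      (EinvFun_continuous (D := D))
    rwa [Set.image_univ, Set.range_eq_univ.mpr
      (Function.RightInverse.surjective (fun Φ => Einv_E Φ))] at this
  have h2 : IsCompact (Set.univ : Set ↥(Cp (Lind D))) := by
    have := h1.image ho.symm.continuous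
    rwa [Set.image_univ, Set.range_eq_univ.mpr ho.symm.surjective] at this
  have h3 : IsCompact ((Cp (Lind D) : Subgroup (Lind D → Circle)) : Set (Lind D → Circle)) := by
    have := h2.image (continuous_subtype_val
      (p := fun x => x ∈ (Cp (Lind D) : Subgroup (Lind D → Circle))))
    rwa [Set.image_univ, Subtype.range_coe] at this
  exact Cp_not_compact h3

end
end Stage6


/-- for the one-point Lindelöfication `Y` of an uncountable discrete set
`D`, the group `C_p(Y, 𝕋)` is not reflexive: its dual is discrete, its bidual is the
compact group `𝕋 × 𝕋^D`, while `C_p(Y, 𝕋)` is a proper dense non-compact subgroup of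
`𝕋^Y`. -/
theorem statement18 (D : Type*) [Uncountable D] :
    DiscreteTopology (PontryaginDual (Cp (Lind D))) ∧
    (∃ e : PontryaginDual (PontryaginDual (Cp (Lind D))) ≃* (Circle × (D → Circle)),
        Continuous e ∧ Continuous e.symm) ∧
    Dense ((Cp (Lind D) : Subgroup (Lind D → Circle)) : Set (Lind D → Circle)) ∧
    (Cp (Lind D) : Subgroup (Lind D → Circle)) ≠ ⊤ ∧
    ¬ IsCompact ((Cp (Lind D) : Subgroup (Lind D → Circle)) : Set (Lind D → Circle)) ∧
    ¬ PontryaginReflexive (Cp (Lind D)) :=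
  ⟨dualCp_discrete, ⟨bidualMulEquiv, EFun_continuous, EinvFun_continuous⟩,
    dense_Cp, Cp_ne_top, Cp_not_compact, Cp_not_reflexive⟩
end
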